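/- arXiv:1409.0732 — 9 statements merged into one kernel-verified Lean document; each statement's English description precedes it below -/
import Mathlib

section
/- Let X be an ℝ^d-valued random variable with E|X|^p < ∞ for some p ∈ (0,∞), and let a^{(N)} ⊂ ℝ^d be any finite set. If μ = law(X) is not supported in a^{(N)}, then there exists ξ* ∈ ℝ^d such that E[min(d(X, a^{(N)}), |X - ξ*|)^p] < E[d(X, a^{(N)})^p]. -/
open MeasureTheory Metric

private lemma rpow_add_le_aux {a b p : ℝ} (ha : 0 ≤ a) (hb : 0 ≤ b) (hp : 0 ≤ p) :
    (a + b) ^ p ≤ 2 ^ p * a ^ p + 2 ^ p * b ^ p := by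
  have h1 : a + b ≤ 2 * max a b := by
    rcases max_cases a b with ⟨h, h'⟩ | ⟨h, h'⟩ <;> nlinarith
  have h2 : (a + b) ^ p ≤ (2 * max a b) ^ p :=
    Real.rpow_le_rpow (by positivity) h1 hp
  have h3 : (2 * max a b) ^ p = 2 ^ p * (max a b) ^ p :=
    Real.mul_rpow (by norm_num) (le_max_of_le_left ha)
  have h4 : (max a b) ^ p ≤ a ^ p + b ^ p := by
    rcases max_cases a b with ⟨h, _⟩ | ⟨h, _⟩ <;> rw [h]
    · nlinarith [Real.rpow_nonneg hb p]
    · nlinarith [Real.rpow_nonneg ha p]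
  have h5 : (0:ℝ) ≤ 2 ^ p := Real.rpow_nonneg (by norm_num) p
  nlinarith

theorem stmt_1 {E : Type*} [NormedAddCommGroup E] [NormedSpace ℝ E] [FiniteDimensional ℝ E]
    [MeasurableSpace E] [BorelSpace E]
    {Ω : Type*} [MeasurableSpace Ω] (P : Measure Ω) [IsProbabilityMeasure P]
    (X : Ω → E) (hX : Measurable X) (p : ℝ) (hp : 0 < p)
    (hLp : Integrable (fun ω => ‖X ω‖ ^ p) P)
    (Γ : Finset E) (hΓ : Γ.Nonempty)
    (hsupp : 0 < Measure.map X P ((↑Γ : Set E)ᶜ)) :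
    ∃ ξ : E, ∫ ω, (min (infDist (X ω) ↑Γ) ‖X ω - ξ‖) ^ p ∂P
      < ∫ ω, infDist (X ω) (↑Γ : Set E) ^ p ∂P := by
  classical
  obtain ⟨a, ha⟩ := hΓ
  have hE : Nonempty E := ⟨a⟩
  set μ := Measure.map X P with hμ
  have hclosed : IsClosed (↑Γ : Set E) := Γ.finite_toSet.isClosed
  obtain ⟨u, hu⟩ : ∃ u : ℕ → E, DenseRange u :=
    ⟨TopologicalSpace.denseSeq E, TopologicalSpace.denseRange_denseSeq E⟩
  set T : ℕ × ℕ → Set E := fun nk =>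
    {x | 1 / ((nk.1 : ℝ) + 1) < infDist x ↑Γ} ∩ ball (u nk.2) (1 / (3 * ((nk.1 : ℝ) + 1)))
    with hT
  have hTopen : ∀ nk, IsOpen (T nk) := fun nk =>
    (isOpen_lt continuous_const (continuous_infDist_pt _)).inter isOpen_ball
  have hcover : ((↑Γ : Set E)ᶜ) ⊆ ⋃ nk, T nk := by
    intro x hx
    have hδ : 0 < infDist x ↑Γ := by
      rw [← hclosed.notMem_iff_infDist_pos ⟨a, ha⟩]
      exact hx
    obtain ⟨n, hn⟩ := exists_nat_one_div_lt hδ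
    obtain ⟨k, hk⟩ := hu.exists_dist_lt x (show (0:ℝ) < 1 / (3 * ((n : ℝ) + 1)) by positivity)
    exact Set.mem_iUnion.2 ⟨(n, k), hn, by simpa [mem_ball] using hk⟩
  have h1 : 0 < μ (⋃ nk, T nk) := lt_of_lt_of_le hsupp (measure_mono hcover)
  obtain ⟨nk, hnk⟩ : ∃ nk, 0 < μ (T nk) := by
    by_contra h
    push_neg at h
    simp only [le_zero_iff] at h
    exact absurd (measure_iUnion_null h) h1.ne'
  refine ⟨u nk.2, ?_⟩
  set ξ := u nk.2 with hξ
  have hkey : ∀ x ∈ T nk, ‖x - ξ‖ < infDist x ↑Γ := by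
    intro x hx
    obtain ⟨hx1, hx2⟩ := hx
    rw [mem_ball] at hx2
    have hpos : (0:ℝ) < (nk.1 : ℝ) + 1 := by positivity
    have h3 : 1 / (3 * ((nk.1 : ℝ) + 1)) < 1 / ((nk.1 : ℝ) + 1) := by
      rw [div_lt_div_iff₀ (by positivity) hpos]; linarith
    calc ‖x - ξ‖ = dist x ξ := (dist_eq_norm _ _).symm
      _ < 1 / (3 * ((nk.1 : ℝ) + 1)) := hx2
      _ < 1 / ((nk.1 : ℝ) + 1) := h3
      _ < infDist x ↑Γ := hx1
  set g : Ω → ℝ := fun ω => infDist (X ω) ↑Γ ^ p with hg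
  set f : Ω → ℝ := fun ω => (min (infDist (X ω) ↑Γ) ‖X ω - ξ‖) ^ p with hf
  have hrp : Measurable fun t : ℝ => t ^ p := (Real.continuous_rpow_const hp.le).measurable
  have hgm : Measurable g :=
    hrp.comp ((continuous_infDist_pt (↑Γ : Set E)).measurable.comp hX)
  have hfm : Measurable f :=
    hrp.comp ((((continuous_infDist_pt (↑Γ : Set E)).measurable.comp hX)).min
      ((hX.sub measurable_const).norm))
  set C := ‖a‖ with hC
  have hgbound : ∀ ω, ‖g ω‖ ≤ 2 ^ p * ‖X ω‖ ^ p + 2 ^ p * C ^ p := by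
    intro ω
    have h0 : 0 ≤ g ω := Real.rpow_nonneg infDist_nonneg p
    rw [Real.norm_of_nonneg h0]
    have hle : infDist (X ω) ↑Γ ≤ ‖X ω‖ + C := by
      calc infDist (X ω) ↑Γ ≤ dist (X ω) a := infDist_le_dist_of_mem ha
        _ = ‖X ω - a‖ := dist_eq_norm _ _
        _ ≤ ‖X ω‖ + ‖a‖ := norm_sub_le _ _
    calc g ω ≤ (‖X ω‖ + C) ^ p := Real.rpow_le_rpow infDist_nonneg hle hp.le
      _ ≤ 2 ^ p * ‖X ω‖ ^ p + 2 ^ p * C ^ p :=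
        rpow_add_le_aux (norm_nonneg _) (norm_nonneg _) hp.le
  have hbint : Integrable (fun ω => 2 ^ p * ‖X ω‖ ^ p + 2 ^ p * C ^ p) P :=
    (hLp.const_mul _).add (integrable_const _)
  have hg_int : Integrable g P :=
    Integrable.mono' hbint hgm.aestronglyMeasurable (Filter.Eventually.of_forall hgbound)
  have hfg : ∀ ω, f ω ≤ g ω := fun ω =>
    Real.rpow_le_rpow (le_min infDist_nonneg (norm_nonneg _)) (min_le_left _ _) hp.le
  have hf_int : Integrable f P :=
    Integrable.mono' hg_int hfm.aestronglyMeasurable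
      (Filter.Eventually.of_forall fun ω => by
        rw [Real.norm_of_nonneg (Real.rpow_nonneg (le_min infDist_nonneg (norm_nonneg _)) p)]
        exact hfg ω)
  have hsub_int : Integrable (fun ω => g ω - f ω) P := hg_int.sub hf_int
  have hpos : 0 < ∫ ω, (g ω - f ω) ∂P := by
    rw [integral_pos_iff_support_of_nonneg_ae
      (Filter.Eventually.of_forall fun ω => sub_nonneg.2 (hfg ω)) hsub_int]
    calc (0:ENNReal) < μ (T nk) := hnk
      _ = P (X ⁻¹' T nk) := Measure.map_apply hX (hTopen nk).measurableSet
      _ ≤ P (Function.support fun ω => g ω - f ω) := by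
        apply measure_mono
        intro ω hω
        have hlt : f ω < g ω := by
          apply Real.rpow_lt_rpow (le_min infDist_nonneg (norm_nonneg _)) _ hp
          exact lt_of_le_of_lt (min_le_right _ _) (hkey _ hω)
        simpa [Function.mem_support] using sub_ne_zero.2 hlt.ne'
  have hs := integral_sub hg_int hf_int
  have : ∫ ω, f ω ∂P < ∫ ω, g ω ∂P := by rw [hs] at hpos; linarith
  exact this
end

section
/- Let X ∈ L^p(ℝ^d) with p ∈ (0,∞), and let a^{(N)} ⊂ ℝ^d be a finite nonempty set with e_p(a^{(N)},X)^p = E[d(X,a^{(N)})^p] > 0 where the law of X is not supported in a^{(N)}. Then the function ξ ↦ E[(d(X,a^{(N)}) ∧ |X-ξ|)^p] attains its infimum over ℝ^d at some point a_{N+1} ∈ ℝ^d. -/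
open MeasureTheory Metric

theorem stmt_2 {E : Type*} [NormedAddCommGroup E] [NormedSpace ℝ E] [FiniteDimensional ℝ E]
    [MeasurableSpace E] [BorelSpace E]
    {Ω : Type*} [MeasurableSpace Ω] (P : Measure Ω) [IsProbabilityMeasure P]
    (X : Ω → E) (hX : Measurable X) (p : ℝ) (hp : 0 < p)
    (hLp : Integrable (fun ω => ‖X ω‖ ^ p) P)
    (Γ : Finset E) (hΓ : Γ.Nonempty)
    (hpos : 0 < ∫ ω, infDist (X ω) (↑Γ : Set E) ^ p ∂P)
    (hsupp : 0 < Measure.map X P ((↑Γ : Set E)ᶜ)) :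
    ∃ a : E, ∀ ξ : E,
      ∫ ω, (min (infDist (X ω) ↑Γ) ‖X ω - a‖) ^ p ∂P
        ≤ ∫ ω, (min (infDist (X ω) ↑Γ) ‖X ω - ξ‖) ^ p ∂P := by
  classical
  obtain ⟨b, hb⟩ := hΓ
  set d : E → ℝ := fun x => infDist x (↑Γ : Set E) with hd
  set f : E → Ω → ℝ := fun ξ ω => (min (d (X ω)) ‖X ω - ξ‖) ^ p with hf
  set g : Ω → ℝ := fun ω => d (X ω) ^ p with hg
  set F : E → ℝ := fun ξ => ∫ ω, f ξ ω ∂P with hF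
  have hΓclosed : IsClosed (↑Γ : Set E) := Γ.finite_toSet.isClosed
  have hcont_d : Continuous d := continuous_infDist_pt _
  have hrpow : Continuous fun t : ℝ => t ^ p := Real.continuous_rpow_const hp.le
  have hd_nonneg : ∀ x, 0 ≤ d x := fun x => infDist_nonneg
  have hmin_nonneg : ∀ ξ x, 0 ≤ min (d x) ‖x - ξ‖ := fun ξ x =>
    le_min (hd_nonneg x) (norm_nonneg _)
  -- integrability of g
  have hg_meas : Measurable g := (hrpow.comp hcont_d).measurable.comp hX
  have hbound : ∀ x : E, d x ^ p ≤ 2 ^ p * (‖x‖ ^ p + ‖b‖ ^ p) := by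
    intro x
    have h1 : d x ≤ ‖x‖ + ‖b‖ := by
      calc d x ≤ dist x b := infDist_le_dist_of_mem (by exact_mod_cast hb)
        _ ≤ ‖x‖ + ‖b‖ := by
          rw [dist_eq_norm]
          exact (norm_sub_le _ _)
    have h2 : d x ^ p ≤ (2 * max ‖x‖ ‖b‖) ^ p := by
      apply Real.rpow_le_rpow (hd_nonneg x) _ hp.le
      calc d x ≤ ‖x‖ + ‖b‖ := h1
        _ ≤ max ‖x‖ ‖b‖ + max ‖x‖ ‖b‖ := add_le_add (le_max_left _ _) (le_max_right _ _)
        _ = 2 * max ‖x‖ ‖b‖ := by ring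
    have h3 : (2 * max ‖x‖ ‖b‖) ^ p = 2 ^ p * (max ‖x‖ ‖b‖) ^ p :=
      Real.mul_rpow (by norm_num) (le_max_of_le_left (norm_nonneg _))
    have h4 : (max ‖x‖ ‖b‖) ^ p ≤ ‖x‖ ^ p + ‖b‖ ^ p := by
      rcases max_cases ‖x‖ ‖b‖ with ⟨h, _⟩ | ⟨h, _⟩ <;> rw [h]
      · exact le_add_of_nonneg_right (Real.rpow_nonneg (norm_nonneg _) _)
      · exact le_add_of_nonneg_left (Real.rpow_nonneg (norm_nonneg _) _)
    calc d x ^ p ≤ 2 ^ p * (max ‖x‖ ‖b‖) ^ p := by rw [← h3]; exact h2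
      _ ≤ 2 ^ p * (‖x‖ ^ p + ‖b‖ ^ p) :=
        mul_le_mul_of_nonneg_left h4 (Real.rpow_nonneg (by norm_num) _)
  have hg_int : Integrable g P := by
    refine Integrable.mono' (((hLp.add (integrable_const (‖b‖ ^ p))).const_mul (2 ^ p)))
      hg_meas.aestronglyMeasurable (Filter.Eventually.of_forall fun ω => ?_)
    rw [Real.norm_eq_abs, abs_of_nonneg (Real.rpow_nonneg (hd_nonneg _) _)]
    exact hbound (X ω)
  -- measurability and bounds for f
  have hf_meas : ∀ ξ, Measurable (f ξ) := fun ξ =>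
    (hrpow.comp (hcont_d.min ((continuous_id.sub continuous_const).norm))).measurable.comp hX
  have hf_nonneg : ∀ ξ ω, 0 ≤ f ξ ω := fun ξ ω => Real.rpow_nonneg (hmin_nonneg ξ (X ω)) _
  have hf_le_g : ∀ ξ ω, f ξ ω ≤ g ω := fun ξ ω =>
    Real.rpow_le_rpow (hmin_nonneg ξ (X ω)) (min_le_left _ _) hp.le
  have hf_norm_le : ∀ ξ, ∀ᵐ ω ∂P, ‖f ξ ω‖ ≤ g ω := fun ξ =>
    Filter.Eventually.of_forall fun ω => by
      rw [Real.norm_eq_abs, abs_of_nonneg (hf_nonneg ξ ω)]; exact hf_le_g ξ ω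
  have hf_int : ∀ ξ, Integrable (f ξ) P := fun ξ =>
    hg_int.mono' (hf_meas ξ).aestronglyMeasurable (hf_norm_le ξ)
  -- continuity of F
  have hFcont : Continuous F := by
    rw [continuous_iff_continuousAt]
    intro ξ₀
    refine continuousAt_of_dominated
      (Filter.Eventually.of_forall fun ξ => (hf_meas ξ).aestronglyMeasurable)
      (Filter.Eventually.of_forall fun ξ => hf_norm_le ξ) hg_int
      (Filter.Eventually.of_forall fun ω => ?_)
    exact ((hrpow.comp (continuous_const.min
      ((continuous_const.sub continuous_id).norm))).continuousAt)
  -- find a point y with F y < ∫ g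
  set μ := Measure.map X P with hμ
  set A : ℕ → Set E := fun n => {x | 1 / ((n : ℝ) + 1) ≤ d x} with hA
  have hA_closed : ∀ n, IsClosed (A n) := fun n => isClosed_le continuous_const hcont_d
  have hcover : ((↑Γ : Set E)ᶜ) ⊆ ⋃ n, A n := by
    intro x hx
    have hdx : 0 < d x := (hΓclosed.notMem_iff_infDist_pos ⟨b, by exact_mod_cast hb⟩).1 hx
    obtain ⟨n, hn⟩ := exists_nat_one_div_lt hdx
    exact Set.mem_iUnion.2 ⟨n, hn.le⟩
  have hexn : ∃ n, 0 < μ (A n) := by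
    by_contra h
    push_neg at h
    have h0 : μ (⋃ n, A n) = 0 :=
      measure_iUnion_null fun n => le_antisymm (h n) zero_le
    exact absurd ((measure_mono hcover).trans_eq h0) (by simpa using hsupp.ne')
  obtain ⟨n, hAn⟩ := hexn
  set δ : ℝ := 1 / (3 * ((n : ℝ) + 1)) with hδ
  have hδpos : 0 < δ := by positivity
  have hδlt : δ < 1 / ((n : ℝ) + 1) := by
    rw [hδ, div_lt_div_iff₀ (by positivity) (by positivity)]
    nlinarith [Nat.cast_nonneg (α := ℝ) n]
  obtain ⟨D, hDc, hDd⟩ := TopologicalSpace.exists_countable_dense E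
  have hcov2 : A n ⊆ ⋃ y ∈ D, A n ∩ ball y δ := by
    intro x hx
    obtain ⟨y, hyD, hxy⟩ := hDd.exists_dist_lt x hδpos
    exact Set.mem_biUnion hyD ⟨hx, by rwa [mem_ball]⟩
  have hexy : ∃ y ∈ D, 0 < μ (A n ∩ ball y δ) := by
    by_contra h
    push_neg at h
    have h0 : μ (⋃ y ∈ D, A n ∩ ball y δ) = 0 :=
      (measure_biUnion_null_iff hDc).2 fun y hy => le_antisymm (h y hy) zero_le
    exact hAn.not_ge ((measure_mono hcov2).trans_eq h0)
  obtain ⟨y, hyD, hSpos⟩ := hexy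
  set S : Set E := A n ∩ ball y δ with hS
  have hS_meas : MeasurableSet S := (hA_closed n).measurableSet.inter measurableSet_ball
  have hkey : ∀ x ∈ S, (min (d x) ‖x - y‖) ^ p < d x ^ p := by
    rintro x ⟨hx1, hx2⟩
    refine Real.rpow_lt_rpow (hmin_nonneg y x) ?_ hp
    have h1 : ‖x - y‖ < δ := by rw [← dist_eq_norm]; exact mem_ball.1 hx2
    calc min (d x) ‖x - y‖ ≤ ‖x - y‖ := min_le_right _ _
      _ < δ := h1
      _ < 1 / ((n : ℝ) + 1) := hδlt
      _ ≤ d x := hx1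
  have hPS : 0 < P (X ⁻¹' S) := by
    rwa [hμ, Measure.map_apply hX hS_meas] at hSpos
  have hlt : F y < ∫ ω, g ω ∂P := by
    have hsub_int : Integrable (fun ω => g ω - f y ω) P := hg_int.sub (hf_int y)
    have hsub_pos : 0 < ∫ ω, (g ω - f y ω) ∂P := by
      rw [integral_pos_iff_support_of_nonneg_ae
        (Filter.Eventually.of_forall fun ω => sub_nonneg.2 (hf_le_g y ω)) hsub_int]
      refine hPS.trans_le (measure_mono ?_)
      intro ω hω
      have : f y ω < g ω := hkey (X ω) hω
      simpa [Function.mem_support, sub_eq_zero] using (ne_of_gt this)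
    rw [integral_sub hg_int (hf_int y)] at hsub_pos
    linarith
  -- large ξ have large F
  have hR : ∃ R : ℝ, ∀ ξ : E, R ≤ ‖ξ‖ → F y < F ξ := by
    by_contra h
    push_neg at h
    choose ξs hξs1 hξs2 using fun m : ℕ => h m
    have htend : Filter.Tendsto (fun m => F (ξs m)) Filter.atTop (nhds (∫ ω, g ω ∂P)) := by
      refine tendsto_integral_of_dominated_convergence g
        (fun m => (hf_meas (ξs m)).aestronglyMeasurable) hg_int
        (fun m => hf_norm_le (ξs m)) (Filter.Eventually.of_forall fun ω => ?_)
      obtain ⟨N, hN⟩ := exists_nat_ge (‖X ω‖ + d (X ω))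
      refine Filter.Tendsto.congr' ?_ tendsto_const_nhds
      rw [Filter.eventuallyEq_iff_exists_mem]
      refine ⟨{m | N ≤ m}, Filter.mem_atTop N, fun m hm => ?_⟩
      have hm' : (N : ℝ) ≤ ‖ξs m‖ := le_trans (by exact_mod_cast hm) (hξs1 m)
      have hge : d (X ω) ≤ ‖X ω - ξs m‖ := by
        have h1 : ‖ξs m‖ - ‖X ω‖ ≤ ‖X ω - ξs m‖ := by
          have := norm_sub_norm_le (ξs m) (X ω)
          rw [norm_sub_rev] at this
          linarith
        linarith
      simp only [hg, hf]
      rw [min_eq_left hge]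
    have hle : (∫ ω, g ω ∂P) ≤ F y :=
      le_of_tendsto htend (Filter.Eventually.of_forall fun m => hξs2 m)
    linarith
  obtain ⟨R, hR⟩ := hR
  set R' : ℝ := max R ‖y‖ with hR'
  have hyK : y ∈ closedBall (0 : E) R' := by
    rw [mem_closedBall, dist_zero_right]
    exact le_max_right _ _
  obtain ⟨a, haK, ha⟩ := (isCompact_closedBall (0 : E) R').exists_isMinOn
    ⟨y, hyK⟩ hFcont.continuousOn
  refine ⟨a, fun ξ => ?_⟩
  show F a ≤ F ξ
  by_cases hξ : ξ ∈ closedBall (0 : E) R'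
  · exact ha hξ
  · have hξ' : R' < ‖ξ‖ := by
      rw [mem_closedBall, dist_zero_right, not_le] at hξ
      exact hξ
    exact le_trans (ha hyK) (hR ξ (le_of_lt (lt_of_le_of_lt (le_max_left _ _) hξ'))).le
end

section
/- Let X ∈ L^p(ℝ^d), p ∈ (0,∞), with law μ whose support contains at least N+1 points, and let (a_k)_{k≥1} be an L^p-optimal greedy quantization sequence. Then e_p(a^{(N+1)}, X) < e_p(a^{(N)}, X); in particular a_{N+1} ∉ {a_1,...,a_N}. -/
open MeasureTheory Metric

/-- The grid `{a 1, ..., a N}` formed by the first `N` terms of the sequence `a`. -/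
def grid {E : Type*} (a : ℕ → E) (N : ℕ) : Set E := a '' Set.Icc 1 N

/-- `a` is an `L^p`-optimal greedy quantization sequence for `X`:
`a (N+1)` minimizes `ξ ↦ ∫ d(X, a^{(N)} ∪ {ξ})^p dP`. -/
def IsGreedy {E : Type*} [NormedAddCommGroup E] [MeasurableSpace E]
    {Ω : Type*} [MeasurableSpace Ω] (P : Measure Ω) (X : Ω → E) (p : ℝ) (a : ℕ → E) : Prop :=
  ∀ N : ℕ, ∀ ξ : E,
    ∫ ω, infDist (X ω) (insert (a (N + 1)) (grid a N)) ^ p ∂P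
      ≤ ∫ ω, infDist (X ω) (insert ξ (grid a N)) ^ p ∂P

private lemma aux_two_rpow {p a b : ℝ} (hp : 0 < p) (ha : 0 ≤ a) (hb : 0 ≤ b) :
    (a + b) ^ p ≤ 2 ^ p * (a ^ p + b ^ p) := by
  have h1 : a + b ≤ 2 * max a b := by
    have := le_max_left a b; have := le_max_right a b; linarith
  calc (a + b) ^ p ≤ (2 * max a b) ^ p :=
        Real.rpow_le_rpow (by positivity) h1 hp.le
    _ = 2 ^ p * (max a b) ^ p := Real.mul_rpow (by norm_num) (le_max_of_le_left ha)
    _ ≤ 2 ^ p * (a ^ p + b ^ p) := by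
        refine mul_le_mul_of_nonneg_left ?_ (Real.rpow_nonneg (by norm_num) p)
        rcases le_total a b with h | h
        · rw [max_eq_right h]
          have := Real.rpow_nonneg ha p; linarith
        · rw [max_eq_left h]
          have := Real.rpow_nonneg hb p; linarith

theorem stmt_3 {E : Type*} [NormedAddCommGroup E] [NormedSpace ℝ E] [FiniteDimensional ℝ E]
    [MeasurableSpace E] [BorelSpace E]
    {Ω : Type*} [MeasurableSpace Ω] (P : Measure Ω) [IsProbabilityMeasure P]
    (X : Ω → E) (hX : Measurable X) (p : ℝ) (hp : 0 < p)
    (hLp : Integrable (fun ω => ‖X ω‖ ^ p) P)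
    (a : ℕ → E) (ha : IsGreedy P X p a) (N : ℕ) (hN : 1 ≤ N)
    (hsupp : ∀ S : Finset E, S.card ≤ N → 0 < Measure.map X P ((↑S : Set E)ᶜ)) :
    (∫ ω, infDist (X ω) (grid a (N + 1)) ^ p ∂P) ^ (1 / p)
      < (∫ ω, infDist (X ω) (grid a N) ^ p ∂P) ^ (1 / p) ∧
    a (N + 1) ∉ grid a N := by
  classical
  set Γ : Set E := grid a N with hΓdef
  have hΓfin : Γ.Finite := (Set.finite_Icc 1 N).image a
  have hΓne : Γ.Nonempty := ⟨a 1, ⟨1, ⟨le_refl 1, hN⟩, rfl⟩⟩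
  have hΓcl : IsClosed Γ := hΓfin.isClosed
  -- integrability of the relevant functions
  have hint : ∀ s : Set E, s.Nonempty → Integrable (fun ω => infDist (X ω) s ^ p) P := by
    rintro s ⟨c, hc⟩
    have hcont : Continuous (fun x : E => infDist x s ^ p) :=
      (continuous_infDist_pt s).rpow_const (fun x => Or.inr hp.le)
    have hmeas : AEStronglyMeasurable (fun ω => infDist (X ω) s ^ p) P :=
      (hcont.measurable.comp hX).aestronglyMeasurable
    refine (((hLp.add (integrable_const (‖c‖ ^ p))).const_mul (2 ^ p)).mono' hmeas ?_)
    filter_upwards with ω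
    rw [Real.norm_eq_abs, abs_of_nonneg (Real.rpow_nonneg infDist_nonneg p)]
    have h1 : infDist (X ω) s ≤ ‖X ω‖ + ‖c‖ := by
      refine (infDist_le_dist_of_mem hc).trans ?_
      rw [dist_eq_norm]; exact norm_sub_le _ _
    calc infDist (X ω) s ^ p ≤ (‖X ω‖ + ‖c‖) ^ p :=
          Real.rpow_le_rpow infDist_nonneg h1 hp.le
      _ ≤ 2 ^ p * (‖X ω‖ ^ p + ‖c‖ ^ p) :=
          aux_two_rpow hp (norm_nonneg _) (norm_nonneg _)
  -- the image measure gives positive mass to Γᶜ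
  have hμΓ : 0 < Measure.map X P Γᶜ := by
    have hcoe : ((((Finset.Icc 1 N).image a : Finset E)) : Set E) = Γ := by
      rw [Finset.coe_image, Finset.coe_Icc]; exact hΓdef.symm
    have hcard : ((Finset.Icc 1 N).image a).card ≤ N := by
      refine (Finset.card_image_le).trans ?_
      rw [Nat.card_Icc]; omega
    have := hsupp ((Finset.Icc 1 N).image a) hcard
    rwa [hcoe] at this
  -- find ε > 0 with positive mass on {x | ε ≤ infDist x Γ}
  have hex : ∃ n : ℕ, 0 < Measure.map X P {x | 1 / (n + 1 : ℝ) ≤ infDist x Γ} := by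
    by_contra h
    push_neg at h
    have hsub : Γᶜ ⊆ ⋃ n : ℕ, {x | 1 / (n + 1 : ℝ) ≤ infDist x Γ} := by
      intro x hx
      have hpos : 0 < infDist x Γ := (hΓcl.notMem_iff_infDist_pos hΓne).1 hx
      obtain ⟨n, hn⟩ := exists_nat_one_div_lt hpos
      exact Set.mem_iUnion.2 ⟨n, hn.le⟩
    have : Measure.map X P Γᶜ = 0 := by
      refine measure_mono_null hsub (measure_iUnion_null fun n => ?_)
      exact le_antisymm (h n) zero_le
    exact absurd this hμΓ.ne'
  obtain ⟨n, hn⟩ := hex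
  set ε : ℝ := 1 / (n + 1 : ℝ) with hεdef
  have hε : 0 < ε := by positivity
  set B : Set E := {x | ε ≤ infDist x Γ} with hBdef
  have hBmeas : MeasurableSet B :=
    (isClosed_le continuous_const (continuous_infDist_pt Γ)).measurableSet
  -- find ξ from a countable dense set with positive mass on B ∩ ball ξ (ε/3)
  obtain ⟨s, hsc, hsd⟩ := TopologicalSpace.exists_countable_dense E
  have hexξ : ∃ ξ ∈ s, 0 < Measure.map X P (B ∩ ball ξ (ε / 3)) := by
    by_contra h
    push_neg at h
    have hsub : B ⊆ ⋃ z ∈ s, (B ∩ ball z (ε / 3)) := by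
      intro x hx
      obtain ⟨z, hz, hdz⟩ := hsd.exists_dist_lt x (by positivity : (0:ℝ) < ε / 3)
      exact Set.mem_biUnion hz ⟨hx, by rwa [mem_ball]⟩
    have : Measure.map X P B = 0 := by
      refine measure_mono_null hsub ((measure_biUnion_null_iff hsc).2 fun z hz => ?_)
      exact le_antisymm (h z hz) zero_le
    exact absurd this hn.ne'
  obtain ⟨ξ, -, hξ⟩ := hexξ
  -- the preimage event has positive probability
  have hPA : 0 < P (X ⁻¹' (B ∩ ball ξ (ε / 3))) := by
    rwa [← Measure.map_apply hX (hBmeas.inter measurableSet_ball)]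
  -- strict inequality of integrals
  have hFi : Integrable (fun ω => infDist (X ω) Γ ^ p) P := hint Γ hΓne
  have hGi : Integrable (fun ω => infDist (X ω) (insert ξ Γ) ^ p) P :=
    hint _ ⟨ξ, Set.mem_insert _ _⟩
  have hGF : ∀ ω, infDist (X ω) (insert ξ Γ) ^ p ≤ infDist (X ω) Γ ^ p := fun ω =>
    Real.rpow_le_rpow infDist_nonneg
      (infDist_le_infDist_of_subset (Set.subset_insert _ _) hΓne) hp.le
  have hlt : ∫ ω, infDist (X ω) (insert ξ Γ) ^ p ∂P < ∫ ω, infDist (X ω) Γ ^ p ∂P := by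
    have hpos : 0 < ∫ ω, (infDist (X ω) Γ ^ p - infDist (X ω) (insert ξ Γ) ^ p) ∂P := by
      rw [integral_pos_iff_support_of_nonneg (fun ω => sub_nonneg.2 (hGF ω)) (hFi.sub hGi)]
      refine lt_of_lt_of_le hPA (measure_mono ?_)
      rintro ω ⟨h1, h2⟩
      have h1' : ε ≤ infDist (X ω) Γ := h1
      have h2' : dist (X ω) ξ < ε / 3 := by rwa [mem_ball] at h2
      have h3 : infDist (X ω) (insert ξ Γ) < infDist (X ω) Γ :=
        lt_of_le_of_lt (infDist_le_dist_of_mem (Set.mem_insert _ _))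
          (h2'.trans_le (by linarith))
      have h4 := Real.rpow_lt_rpow infDist_nonneg h3 hp
      exact sub_ne_zero_of_ne h4.ne'
    rw [integral_sub hFi hGi] at hpos
    linarith
  -- assemble
  have hgrid : grid a (N + 1) = insert (a (N + 1)) Γ := by
    have hIcc : Set.Icc 1 (N + 1) = insert (N + 1) (Set.Icc 1 N) := by
      ext k; simp only [Set.mem_Icc, Set.mem_insert_iff]; omega
    rw [hΓdef]; unfold grid
    rw [hIcc, Set.image_insert_eq]
  have key : ∫ ω, infDist (X ω) (grid a (N + 1)) ^ p ∂P < ∫ ω, infDist (X ω) Γ ^ p ∂P := by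
    calc ∫ ω, infDist (X ω) (grid a (N + 1)) ^ p ∂P
        = ∫ ω, infDist (X ω) (insert (a (N + 1)) (grid a N)) ^ p ∂P := by rw [hgrid, ← hΓdef]
      _ ≤ ∫ ω, infDist (X ω) (insert ξ (grid a N)) ^ p ∂P := ha N ξ
      _ < ∫ ω, infDist (X ω) Γ ^ p ∂P := hlt
  constructor
  · exact Real.rpow_lt_rpow
      (integral_nonneg fun ω => Real.rpow_nonneg infDist_nonneg p) key
      (one_div_pos.2 hp)
  · intro hmem
    have : insert (a (N + 1)) Γ = Γ := Set.insert_eq_self.2 hmem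
    rw [hgrid, this] at key
    exact lt_irrefl _ key
end

section
/- Let X ∈ L^p(ℝ^d), p ∈ (0,∞), and let (a_N)_{N≥1} be an L^p-optimal greedy quantization sequence for X. Then e_p(a^{(N)}, X) → 0 as N → ∞; equivalently, ∫ min_{1≤i≤N} |ξ - a_i|^p μ(dξ) → 0. -/
open MeasureTheory Metric Filter

lemma aux_rpow_add {p : ℝ} (hp : 0 < p) {x y : ℝ} (hx : 0 ≤ x) (hy : 0 ≤ y) :
    (x + y) ^ p ≤ 2 ^ p * (x ^ p + y ^ p) := by
  have h1 : x + y ≤ 2 * max x y := by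
    rcases le_total x y with h | h
    · rw [max_eq_right h]; linarith
    · rw [max_eq_left h]; linarith
  calc (x + y) ^ p ≤ (2 * max x y) ^ p :=
        Real.rpow_le_rpow (by positivity) h1 hp.le
    _ = 2 ^ p * (max x y) ^ p := Real.mul_rpow (by norm_num) (le_max_iff.mpr (Or.inl hx))
    _ ≤ 2 ^ p * (x ^ p + y ^ p) := by
        have h2 : (max x y) ^ p ≤ x ^ p + y ^ p := by
          rcases max_cases x y with ⟨h, _⟩ | ⟨h, _⟩ <;> rw [h]
          · nlinarith [Real.rpow_nonneg hy p]
          · nlinarith [Real.rpow_nonneg hx p]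
        have h3 : (0 : ℝ) ≤ 2 ^ p := Real.rpow_nonneg (by norm_num) p
        nlinarith

lemma my_infDist_insert {α : Type*} [PseudoMetricSpace α] {s : Set α} (hs : s.Nonempty)
    (x y : α) : infDist x (insert y s) = min (dist x y) (infDist x s) := by
  simp only [Metric.infDist, Set.insert_eq, EMetric.infEdist_union, EMetric.infEdist_singleton]
  rw [ENNReal.toReal_inf (edist_ne_top _ _) (infEdist_ne_top hs), dist_edist]

lemma grid_succ {E : Type*} (a : ℕ → E) (N : ℕ) :
    grid a (N + 1) = insert (a (N + 1)) (grid a N) := by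
  unfold grid
  rw [show Set.Icc 1 (N + 1) = insert (N + 1) (Set.Icc 1 N) from by
    ext n; simp only [Set.mem_Icc, Set.mem_insert_iff]; omega, Set.image_insert_eq]

lemma mem_grid_one {E : Type*} (a : ℕ → E) {N : ℕ} (hN : 1 ≤ N) : a 1 ∈ grid a N :=
  ⟨1, by simp only [Set.mem_Icc]; omega, rfl⟩

theorem stmt_4 {E : Type*} [NormedAddCommGroup E] [NormedSpace ℝ E] [FiniteDimensional ℝ E]
    [MeasurableSpace E] [BorelSpace E]
    {Ω : Type*} [MeasurableSpace Ω] (P : Measure Ω) [IsProbabilityMeasure P]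
    (X : Ω → E) (hX : Measurable X) (p : ℝ) (hp : 0 < p)
    (hLp : Integrable (fun ω => ‖X ω‖ ^ p) P)
    (a : ℕ → E) (ha : IsGreedy P X p a) :
    Tendsto (fun N => ∫ ω, infDist (X ω) (grid a N) ^ p ∂P) atTop (nhds 0) := by
  -- setup
  set D : ℕ → Ω → ℝ := fun n ω => infDist (X ω) (grid a (n + 1)) with hDdef
  set d : Ω → ℝ := fun ω => ⨅ n, D n ω with hddef
  have hDnonneg : ∀ n ω, 0 ≤ D n ω := fun n ω => infDist_nonneg
  have hmeasD : ∀ n, Measurable (D n) := fun n =>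
    (continuous_infDist_pt (grid a (n + 1))).measurable.comp hX
  have hgridsub : ∀ n, grid a (n + 1) ⊆ grid a (n + 1 + 1) := fun n =>
    Set.image_mono (Set.Icc_subset_Icc_right (by omega))
  have hDanti : ∀ ω, Antitone fun n => D n ω := fun ω =>
    antitone_nat_of_succ_le fun n =>
      infDist_le_infDist_of_subset (hgridsub n) ⟨a 1, mem_grid_one a (by omega)⟩
  have hbdd : ∀ ω, BddBelow (Set.range fun n => D n ω) := fun ω =>
    ⟨0, Set.forall_mem_range.2 fun n => hDnonneg n ω⟩
  have hdnonneg : ∀ ω, 0 ≤ d ω := fun ω => Real.iInf_nonneg fun n => hDnonneg n ω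
  have hdleD : ∀ n ω, d ω ≤ D n ω := fun n ω => ciInf_le (hbdd ω) n
  have hdlim : ∀ ω, Tendsto (fun n => D n ω) atTop (nhds (d ω)) := fun ω =>
    tendsto_atTop_ciInf (hDanti ω) (hbdd ω)
  have hmeasd : Measurable d := Measurable.iInf hmeasD
  have hDle : ∀ n ω, D n ω ≤ dist (X ω) (a 1) := fun n ω =>
    infDist_le_dist_of_mem (mem_grid_one a (by omega))
  have hdle : ∀ ω, d ω ≤ dist (X ω) (a 1) := fun ω => (hdleD 0 ω).trans (hDle 0 ω)
  -- continuity of rpow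
  have hrp : ∀ x : ℝ, ContinuousAt (fun t : ℝ => t ^ p) x := fun x =>
    Real.continuousAt_rpow_const x p (Or.inr hp.le)
  -- integrability of dist-rpow
  have hint : ∀ c : E, Integrable (fun ω => dist (X ω) c ^ p) P := by
    intro c
    have hmeas : Measurable fun ω => dist (X ω) c ^ p :=
      ((Real.continuous_rpow_const hp.le).measurable.comp (hX.dist measurable_const))
    refine Integrable.mono' ((hLp.add (integrable_const (‖c‖ ^ p))).const_mul (2 ^ p))
      hmeas.aestronglyMeasurable (Eventually.of_forall fun ω => ?_)
    rw [Real.norm_of_nonneg (Real.rpow_nonneg dist_nonneg _)]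
    calc dist (X ω) c ^ p ≤ (‖X ω‖ + ‖c‖) ^ p :=
          Real.rpow_le_rpow dist_nonneg (by rw [dist_eq_norm]; exact norm_sub_le _ _) hp.le
      _ ≤ 2 ^ p * (‖X ω‖ ^ p + ‖c‖ ^ p) := aux_rpow_add hp (norm_nonneg _) (norm_nonneg _)
  have hbound := hint (a 1)
  have hintD : ∀ n, Integrable (fun ω => D n ω ^ p) P := fun n =>
    hbound.mono' ((Real.continuous_rpow_const hp.le).measurable.comp (hmeasD n)).aestronglyMeasurable
      (Eventually.of_forall fun ω => by
        rw [Real.norm_of_nonneg (Real.rpow_nonneg (hDnonneg n ω) _)]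
        exact Real.rpow_le_rpow (hDnonneg n ω) (hDle n ω) hp.le)
  have hintd : Integrable (fun ω => d ω ^ p) P :=
    hbound.mono' ((Real.continuous_rpow_const hp.le).measurable.comp hmeasd).aestronglyMeasurable
      (Eventually.of_forall fun ω => by
        rw [Real.norm_of_nonneg (Real.rpow_nonneg (hdnonneg ω) _)]
        exact Real.rpow_le_rpow (hdnonneg ω) (hdle ω) hp.le)
  -- F tends to L
  set F : ℕ → ℝ := fun n => ∫ ω, D n ω ^ p ∂P with hFdef
  set L : ℝ := ∫ ω, d ω ^ p ∂P with hLdef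
  have hF : Tendsto F atTop (nhds L) := by
    refine tendsto_integral_of_dominated_convergence (fun ω => dist (X ω) (a 1) ^ p)
      (fun n => ((Real.continuous_rpow_const hp.le).measurable.comp (hmeasD n)).aestronglyMeasurable) hbound
      (fun n => Eventually.of_forall fun ω => ?_) (Eventually.of_forall fun ω => ?_)
    · rw [Real.norm_of_nonneg (Real.rpow_nonneg (hDnonneg n ω) _)]
      exact Real.rpow_le_rpow (hDnonneg n ω) (hDle n ω) hp.le
    · exact ((hrp (d ω)).tendsto).comp (hdlim ω)
  have hFanti : Antitone F := antitone_nat_of_succ_le fun n =>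
    integral_mono (hintD (n + 1)) (hintD n) fun ω =>
      Real.rpow_le_rpow (hDnonneg _ ω) (hDanti ω (Nat.le_succ n)) hp.le
  have hLleF : ∀ n, L ≤ F n := fun n =>
    le_of_tendsto hF (eventually_atTop.2 ⟨n, fun m hm => hFanti hm⟩)
  -- the greedy inequality in terms of D
  have key : ∀ (n : ℕ) (ξ : E),
      F (n + 1) ≤ ∫ ω, min (dist (X ω) ξ) (D n ω) ^ p ∂P := by
    intro n ξ
    have h := ha (n + 1) ξ
    have h1 : ∀ ω, infDist (X ω) (insert (a (n + 1 + 1)) (grid a (n + 1))) = D (n + 1) ω :=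
      fun ω => by rw [← grid_succ]
    have h2 : ∀ ω, infDist (X ω) (insert ξ (grid a (n + 1))) = min (dist (X ω) ξ) (D n ω) :=
      fun ω => my_infDist_insert ⟨a 1, mem_grid_one a (by omega)⟩ _ _
    simp only [h1, h2] at h
    exact h
  -- integrability of min-integrands
  have hintmin : ∀ ξ : E, Integrable (fun ω => min (dist (X ω) ξ) (d ω) ^ p) P := fun ξ =>
    hbound.mono' ((Real.continuous_rpow_const hp.le).measurable.comp ((hX.dist measurable_const).min hmeasd)).aestronglyMeasurable
      (Eventually.of_forall fun ω => by
        rw [Real.norm_of_nonneg (Real.rpow_nonneg (le_min dist_nonneg (hdnonneg ω)) _)]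
        exact Real.rpow_le_rpow (le_min dist_nonneg (hdnonneg ω))
          ((min_le_right _ _).trans (hdle ω)) hp.le)
  -- For every ξ, a.e. d ≤ dist (X ω) ξ
  have haed : ∀ ξ : E, ∀ᵐ ω ∂P, d ω ≤ dist (X ω) ξ := by
    intro ξ
    have hG : Tendsto (fun n => ∫ ω, min (dist (X ω) ξ) (D n ω) ^ p ∂P) atTop
        (nhds (∫ ω, min (dist (X ω) ξ) (d ω) ^ p ∂P)) := by
      refine tendsto_integral_of_dominated_convergence (fun ω => dist (X ω) (a 1) ^ p)
        (fun n => ((Real.continuous_rpow_const hp.le).measurable.comp ((hX.dist measurable_const).min (hmeasD n))).aestronglyMeasurable)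
        hbound (fun n => Eventually.of_forall fun ω => ?_)
        (Eventually.of_forall fun ω => ?_)
      · rw [Real.norm_of_nonneg (Real.rpow_nonneg (le_min dist_nonneg (hDnonneg n ω)) _)]
        exact Real.rpow_le_rpow (le_min dist_nonneg (hDnonneg n ω))
          ((min_le_right _ _).trans (hDle n ω)) hp.le
      · exact ((hrp _).tendsto).comp (tendsto_const_nhds.min (hdlim ω))
    have hLlemin : L ≤ ∫ ω, min (dist (X ω) ξ) (d ω) ^ p ∂P :=
      ge_of_tendsto hG (Eventually.of_forall fun n => (hLleF (n + 1)).trans (key n ξ))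
    have hminleL : (∫ ω, min (dist (X ω) ξ) (d ω) ^ p ∂P) ≤ L :=
      integral_mono (hintmin ξ) hintd fun ω =>
        Real.rpow_le_rpow (le_min dist_nonneg (hdnonneg ω)) (min_le_right _ _) hp.le
    have heq : ∫ ω, (d ω ^ p - min (dist (X ω) ξ) (d ω) ^ p) ∂P = 0 := by
      rw [integral_sub hintd (hintmin ξ)]
      linarith
    have hae := (integral_eq_zero_iff_of_nonneg_ae
      (Eventually.of_forall fun ω => sub_nonneg.2
        (Real.rpow_le_rpow (le_min dist_nonneg (hdnonneg ω)) (min_le_right _ _) hp.le))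
      (hintd.sub (hintmin ξ))).1 heq
    refine hae.mono fun ω h => ?_
    simp only [Pi.zero_apply, sub_eq_zero] at h
    by_contra hcon
    push_neg at hcon
    have hmin : min (dist (X ω) ξ) (d ω) = dist (X ω) ξ := min_eq_left hcon.le
    rw [hmin] at h
    exact absurd h (ne_of_gt (Real.rpow_lt_rpow dist_nonneg hcon hp))
  -- use a dense sequence to conclude d = 0 a.e.
  have : Nonempty E := ⟨0⟩
  set b : ℕ → E := TopologicalSpace.denseSeq E with hbdef
  have hdense : DenseRange b := TopologicalSpace.denseRange_denseSeq E
  have haeall : ∀ᵐ ω ∂P, ∀ k, d ω ≤ dist (X ω) (b k) := ae_all_iff.2 fun k => haed (b k)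
  have hdzero : ∀ᵐ ω ∂P, d ω = 0 := by
    refine haeall.mono fun ω h => le_antisymm ?_ (hdnonneg ω)
    refine le_of_forall_pos_le_add fun ε hε => ?_
    obtain ⟨k, hk⟩ := hdense.exists_dist_lt (X ω) hε
    calc d ω ≤ dist (X ω) (b k) := h k
      _ ≤ 0 + ε := by linarith
  have hL0 : L = 0 := by
    rw [hLdef]
    rw [integral_congr_ae (hdzero.mono fun ω h => by
      rw [h, Real.zero_rpow hp.ne'])]
    simp
  -- conclude
  rw [← tendsto_add_atTop_iff_nat 1]
  have : (fun n => ∫ ω, infDist (X ω) (grid a (n + 1)) ^ p ∂P) = F := rfl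
  rw [this, ← hL0]
  exact hF
end

section
/- Let p ∈ (0,∞), q > p, X with law μ, and let (a_N) be an L^p-optimal greedy sequence. Suppose there exists a constant C > 0 such that for all N ≥ 1, e_q(a^{(N)}, X)^{p+d} ≤ C·(e_p(a^{(N)},X)^p - e_p(a^{(N+1)},X)^p), and suppose limsup_N N^{1/d} e_p(a^{(N)},X) < ∞. Then limsup_N N^{1/d} e_q(a^{(N)}, X) < ∞. -/
open MeasureTheory Metric

private lemma tele_aux (g : ℕ → ℝ) (N : ℕ) :
    ∀ n : ℕ, ∑ k ∈ Finset.Icc N (N + n), (g k - g (k + 1)) = g N - g (N + n + 1) := by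
  intro n
  induction n with
  | zero => simp
  | succ n ih =>
      rw [show N + (n + 1) = (N + n) + 1 by ring,
        Finset.sum_Icc_succ_top (by omega), ih]
      ring

theorem stmt_9 {d : ℕ} (hd : 0 < d) {E : Type*} [NormedAddCommGroup E] [NormedSpace ℝ E]
    [FiniteDimensional ℝ E] (hdim : Module.finrank ℝ E = d)
    [MeasurableSpace E] [BorelSpace E]
    {Ω : Type*} [MeasurableSpace Ω] (P : Measure Ω) [IsProbabilityMeasure P]
    (X : Ω → E) (hX : Measurable X) (p q : ℝ) (hp : 0 < p) (hpq : p < q)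
    (a : ℕ → E) (ha : IsGreedy P X p a)
    (C : ℝ) (hC : 0 < C)
    (hkey : ∀ N : ℕ, 1 ≤ N →
      ((∫ ω, infDist (X ω) (grid a N) ^ q ∂P) ^ (1 / q)) ^ (p + d)
        ≤ C * (∫ ω, infDist (X ω) (grid a N) ^ p ∂P
               - ∫ ω, infDist (X ω) (grid a (N + 1)) ^ p ∂P))
    (C' : ℝ)
    (hrate : ∀ N : ℕ, 1 ≤ N →
      (N : ℝ) ^ ((1 : ℝ) / d) * (∫ ω, infDist (X ω) (grid a N) ^ p ∂P) ^ (1 / p) ≤ C') :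
    ∃ C'' : ℝ, ∀ N : ℕ, 1 ≤ N →
      (N : ℝ) ^ ((1 : ℝ) / d) * (∫ ω, infDist (X ω) (grid a N) ^ q ∂P) ^ (1 / q) ≤ C'' := by
  classical
  have hq : 0 < q := hp.trans hpq
  have hdR : (0 : ℝ) < d := by exact_mod_cast hd
  set t : ℝ := p + d with ht_def
  have ht : 0 < t := by positivity
  set Ip : ℕ → ℝ := fun k => ∫ ω, infDist (X ω) (grid a k) ^ p ∂P with hIp_def
  set Iq : ℕ → ℝ := fun k => ∫ ω, infDist (X ω) (grid a k) ^ q ∂P with hIq_def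
  set eq : ℕ → ℝ := fun k => (Iq k) ^ (1 / q) with heq_def
  have hIq_nonneg : ∀ k, 0 ≤ Iq k := fun k =>
    integral_nonneg fun ω => Real.rpow_nonneg infDist_nonneg q
  have hIp_nonneg : ∀ k, 0 ≤ Ip k := fun k =>
    integral_nonneg fun ω => Real.rpow_nonneg infDist_nonneg p
  have heq_nonneg : ∀ k, 0 ≤ eq k := fun k => Real.rpow_nonneg (hIq_nonneg k) _
  -- monotonicity of grids and pointwise bounds
  have hgrid_mono : ∀ {j k : ℕ}, j ≤ k → grid a j ⊆ grid a k := by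
    intro j k hjk
    exact Set.image_mono (Set.Icc_subset_Icc_right hjk)
  have hgrid_ne : ∀ {j : ℕ}, 1 ≤ j → (grid a j).Nonempty := by
    intro j hj
    exact ⟨a 1, ⟨1, ⟨le_refl 1, hj⟩, rfl⟩⟩
  have hpt : ∀ j k : ℕ, 1 ≤ j → j ≤ k → ∀ ω,
      infDist (X ω) (grid a k) ^ q ≤ infDist (X ω) (grid a j) ^ q := by
    intro j k hj hjk ω
    exact Real.rpow_le_rpow infDist_nonneg
      (infDist_le_infDist_of_subset (hgrid_mono hjk) (hgrid_ne hj)) hq.le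
  have hmeas : ∀ k : ℕ, Measurable fun ω => infDist (X ω) (grid a k) ^ q := by
    intro k
    exact (((Real.continuous_rpow_const hq.le).comp
      (continuous_infDist_pt (grid a k))).measurable).comp hX
  by_cases hexist : ∃ k : ℕ, 1 ≤ k ∧ Integrable (fun ω => infDist (X ω) (grid a k) ^ q) P
  · obtain ⟨k0, hk0, hk0int⟩ := hexist
    -- integrability beyond k0
    have hint : ∀ k : ℕ, k0 ≤ k → Integrable (fun ω => infDist (X ω) (grid a k) ^ q) P := by
      intro k hk
      refine hk0int.mono' ((hmeas k).aestronglyMeasurable) ?_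
      filter_upwards with ω
      rw [Real.norm_of_nonneg (Real.rpow_nonneg infDist_nonneg q)]
      exact hpt k0 k hk0 hk ω
    -- monotonicity of Iq beyond k0
    have hIq_mono : ∀ j k : ℕ, k0 ≤ j → j ≤ k → Iq k ≤ Iq j := by
      intro j k hj hjk
      refine integral_mono_of_nonneg ?_ (hint j hj) ?_
      · filter_upwards with ω using Real.rpow_nonneg infDist_nonneg q
      · filter_upwards with ω using hpt j k (hk0.trans hj) hjk ω
    have hC' : 0 ≤ C' := by
      have h1 : (0:ℝ) ≤ ((1:ℕ) : ℝ) ^ ((1:ℝ)/d) * (Ip 1) ^ (1/p) :=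
        mul_nonneg (Real.rpow_nonneg (by norm_num) _)
          (Real.rpow_nonneg (hIp_nonneg 1) _)
      exact le_trans h1 (hrate 1 (le_refl 1))
    -- the asymptotic constant
    set K : ℝ := (2 : ℝ) ^ ((1:ℝ)/d) * (C * C' ^ p) ^ (1 / t) with hK_def
    have hK_nonneg : 0 ≤ K := by
      have : (0:ℝ) ≤ C * C' ^ p := by positivity
      positivity
    -- the constant for small M
    have hne : (Finset.Icc 1 (2 * k0)).Nonempty := ⟨1, by simp; omega⟩
    set Cs : ℝ := (Finset.Icc 1 (2 * k0)).sup' hne (fun M : ℕ => (M : ℝ) ^ ((1:ℝ)/d) * eq M)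
      with hCs_def
    refine ⟨max K Cs, ?_⟩
    intro M hM
    by_cases hMbig : 2 * k0 ≤ M
    · -- main case
      refine le_trans ?_ (le_max_left K Cs)
      set N : ℕ := M / 2 + 1 with hN_def
      have hNk0 : k0 ≤ N := by omega
      have hN1 : 1 ≤ N := by omega
      have hNM : N ≤ M := by omega
      have hM2 : 2 ≤ M := by omega
      have hA : (0:ℝ) < (M:ℝ) := by exact_mod_cast (by omega : 0 < M)
      have hA2 : (0:ℝ) < (M:ℝ) / 2 := by linarith
      -- per-term bound
      have hterm : ∀ k ∈ Finset.Icc N M, eq M ^ t ≤ C * (Ip k - Ip (k + 1)) := by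
        intro k hk
        simp only [Finset.mem_Icc] at hk
        have h1 : Iq M ≤ Iq k := hIq_mono k M (hNk0.trans hk.1) hk.2
        have h2 : eq M ≤ eq k :=
          Real.rpow_le_rpow (hIq_nonneg M) h1 (by positivity)
        have h3 : eq M ^ t ≤ eq k ^ t :=
          Real.rpow_le_rpow (heq_nonneg M) h2 ht.le
        exact h3.trans (hkey k (hN1.trans hk.1))
      -- telescoping sum
      have hsum : ((Finset.Icc N M).card : ℝ) * eq M ^ t ≤ C * (Ip N - Ip (M + 1)) := by
        have h1 := Finset.card_nsmul_le_sum (Finset.Icc N M)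
          (fun k => C * (Ip k - Ip (k + 1))) (eq M ^ t) hterm
        rw [nsmul_eq_mul] at h1
        refine h1.trans (le_of_eq ?_)
        rw [← Finset.mul_sum]
        congr 1
        have hMeq : M = N + (M - N) := by omega
        rw [hMeq, tele_aux (fun k => Ip k) N (M - N)]
      have hcard : ((Finset.Icc N M).card : ℝ) = ((M + 1 - N : ℕ) : ℝ) := by
        rw [Nat.card_Icc]
      have hc_ge : (M:ℝ) / 2 ≤ ((M + 1 - N : ℕ) : ℝ) := by
        have h : (M:ℝ) ≤ 2 * ((M + 1 - N : ℕ) : ℝ) := by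
          exact_mod_cast (show M ≤ 2 * (M + 1 - N) by omega)
        linarith
      have hc_pos : (0:ℝ) < ((M + 1 - N : ℕ) : ℝ) := lt_of_lt_of_le hA2 hc_ge
      -- rate bound on Ip N
      have hNge : (M:ℝ) / 2 ≤ (N:ℝ) := by
        have h : (M:ℝ) ≤ 2 * (N:ℝ) := by
          exact_mod_cast (show M ≤ 2 * N by omega)
        linarith
      have hNpos : (0:ℝ) < (N:ℝ) := lt_of_lt_of_le hA2 hNge
      have hIpN : Ip N ≤ C' ^ p * ((M:ℝ)/2) ^ (-(p/d)) := by
        have hr := hrate N hN1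
        have hNd : (0:ℝ) < (N:ℝ) ^ ((1:ℝ)/d) := Real.rpow_pos_of_pos hNpos _
        have step1 : (Ip N) ^ (1/p) ≤ C' * (N:ℝ) ^ (-(1/(d:ℝ))) := by
          rw [Real.rpow_neg hNpos.le, ← div_eq_mul_inv, le_div_iff₀ hNd]
          linarith [hr]
        have step2 : Ip N ≤ (C' * (N:ℝ) ^ (-(1/(d:ℝ)))) ^ p := by
          have h4 := Real.rpow_le_rpow (Real.rpow_nonneg (hIp_nonneg N) _) step1 hp.le
          rwa [← Real.rpow_mul (hIp_nonneg N), one_div_mul_cancel hp.ne',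
            Real.rpow_one] at h4
        have step3 : (C' * (N:ℝ) ^ (-(1/(d:ℝ)))) ^ p = C' ^ p * (N:ℝ) ^ (-(p/d)) := by
          rw [Real.mul_rpow hC' (Real.rpow_nonneg hNpos.le _),
            ← Real.rpow_mul hNpos.le]
          congr 2
          ring
        have step4 : (N:ℝ) ^ (-(p/(d:ℝ))) ≤ ((M:ℝ)/2) ^ (-(p/(d:ℝ))) :=
          Real.rpow_le_rpow_of_nonpos hA2 hNge (neg_nonpos.mpr (by positivity))
        calc Ip N ≤ C' ^ p * (N:ℝ) ^ (-(p/(d:ℝ))) := by rw [← step3]; exact step2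
          _ ≤ C' ^ p * ((M:ℝ)/2) ^ (-(p/(d:ℝ))) :=
            mul_le_mul_of_nonneg_left step4 (by positivity)
      -- key algebraic identity
      have hiden : (M:ℝ) ^ (t/d) * ((M:ℝ)/2) ^ (-(p/(d:ℝ)))
          = 2 ^ (t/(d:ℝ)) * ((M:ℝ)/2) := by
        have he : -(p/(d:ℝ)) = 1 - t/d := by
          rw [ht_def]
          field_simp
          ring
        rw [he, Real.rpow_sub hA2, Real.rpow_one]
        rw [div_eq_mul_inv ((M:ℝ)/2), ← Real.rpow_neg hA2.le]
        rw [show (M:ℝ) ^ (t/(d:ℝ)) * (((M:ℝ)/2) * ((M:ℝ)/2) ^ (-(t/(d:ℝ))))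
            = ((M:ℝ) ^ (t/(d:ℝ)) * ((M:ℝ)/2) ^ (-(t/(d:ℝ)))) * ((M:ℝ)/2) by ring]
        congr 1
        rw [Real.rpow_neg hA2.le, ← div_eq_mul_inv, ← Real.div_rpow hA.le hA2.le]
        congr 1
        field_simp
      -- conclude via t-th powers
      have hgoal_t : ((M:ℝ) ^ ((1:ℝ)/d) * eq M) ^ t ≤ K ^ t := by
        have hKt : K ^ t = 2 ^ (t/(d:ℝ)) * (C * C' ^ p) := by
          have h0 : (0:ℝ) ≤ C * C' ^ p := by positivity
          rw [hK_def, Real.mul_rpow (by positivity) (Real.rpow_nonneg h0 _),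
            ← Real.rpow_mul (by norm_num : (0:ℝ) ≤ 2),
            ← Real.rpow_mul h0, one_div_mul_cancel ht.ne', Real.rpow_one]
          congr 2
          ring
        have hLt : ((M:ℝ) ^ ((1:ℝ)/d) * eq M) ^ t = (M:ℝ) ^ (t/(d:ℝ)) * eq M ^ t := by
          rw [Real.mul_rpow (Real.rpow_nonneg hA.le _) (heq_nonneg M),
            ← Real.rpow_mul hA.le]
          congr 2
          ring
        rw [hLt, hKt]
        -- from hsum : card * eq M ^ t ≤ C * (Ip N - Ip (M+1)) ≤ C * Ip N
        have h5 : ((M + 1 - N : ℕ) : ℝ) * eq M ^ t ≤ C * Ip N := by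
          rw [← hcard]
          refine hsum.trans ?_
          have := hIp_nonneg (M + 1)
          nlinarith
        have h6 : eq M ^ t ≤ C * Ip N / ((M + 1 - N : ℕ) : ℝ) := by
          rw [le_div_iff₀ hc_pos]
          linarith [h5]
        have h7 : C * Ip N / ((M + 1 - N : ℕ) : ℝ)
            ≤ C * (C' ^ p * ((M:ℝ)/2) ^ (-(p/(d:ℝ)))) / ((M:ℝ)/2) := by
          apply div_le_div₀ (by positivity)
            (mul_le_mul_of_nonneg_left hIpN hC.le) hA2 hc_ge
        have h8 : (M:ℝ) ^ (t/(d:ℝ)) * eq M ^ t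
            ≤ (M:ℝ) ^ (t/(d:ℝ)) * (C * (C' ^ p * ((M:ℝ)/2) ^ (-(p/(d:ℝ)))) / ((M:ℝ)/2)) :=
          mul_le_mul_of_nonneg_left (h6.trans h7) (Real.rpow_nonneg hA.le _)
        refine h8.trans (le_of_eq ?_)
        rw [show (M:ℝ) ^ (t/(d:ℝ)) * (C * (C' ^ p * ((M:ℝ)/2) ^ (-(p/(d:ℝ)))) / ((M:ℝ)/2))
            = ((M:ℝ) ^ (t/(d:ℝ)) * ((M:ℝ)/2) ^ (-(p/(d:ℝ)))) * (C * C' ^ p) / ((M:ℝ)/2) by ring,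
          hiden]
        field_simp
      by_contra hcon
      push_neg at hcon
      have := Real.rpow_lt_rpow hK_nonneg hcon ht
      linarith [hgoal_t]
    · -- small case
      refine le_trans ?_ (le_max_right K Cs)
      have hmem : M ∈ Finset.Icc 1 (2 * k0) := by simp; omega
      exact Finset.le_sup' (fun M : ℕ => (M : ℝ) ^ ((1:ℝ)/d) * eq M) hmem
  · -- all integrals are junk zero
    push_neg at hexist
    refine ⟨0, ?_⟩
    intro M hM
    have h0 : Iq M = 0 := integral_undef (hexist M hM)
    have : eq M = 0 := by
      rw [heq_def]
      simp only
      rw [h0, Real.zero_rpow (by positivity)]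
    calc (M : ℝ) ^ ((1:ℝ)/d) * Iq M ^ (1/q) = (M:ℝ) ^ ((1:ℝ)/d) * eq M := rfl
      _ = 0 := by rw [this, mul_zero]
      _ ≤ 0 := le_refl 0
end

section
/- For any N-tuple (ξ_1,...,ξ_N) of points in [0,1] and X uniformly distributed on [0,1], the L^1 mean quantization error satisfies e_1({ξ_1,...,ξ_N}, X) = ∫_0^1 min_{1≤i≤N}|u - ξ_i| du ≤ D*_N(ξ_1,...,ξ_N), where D*_N is the star discrepancy. -/
open MeasureTheory Metric
open scoped Classical

/-- The star discrepancy of the points `ξ 0, ..., ξ (N-1)` in `[0,1]`. -/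
noncomputable def starDisc (N : ℕ) (ξ : Fin N → ℝ) : ℝ :=
  ⨆ u : Set.Icc (0 : ℝ) 1,
    |(N : ℝ)⁻¹ * ((Finset.univ.filter (fun i : Fin N => ξ i ≤ (u : ℝ))).card : ℝ) - (u : ℝ)|

theorem stmt_10 (N : ℕ) (hN : 0 < N) (ξ : Fin N → ℝ)
    (hξ : ∀ i, ξ i ∈ Set.Icc (0 : ℝ) 1) :
    ∫ u in Set.Icc (0 : ℝ) 1, infDist u (Set.range ξ) ≤ starDisc N ξ := by
  set D := starDisc N ξ with hD
  have hNR : (0 : ℝ) < N := by exact_mod_cast hN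
  have hbdd : BddAbove (Set.range fun u : Set.Icc (0:ℝ) 1 =>
      |(N : ℝ)⁻¹ * ((Finset.univ.filter (fun i : Fin N => ξ i ≤ (u : ℝ))).card : ℝ) - (u : ℝ)|) := by
    refine ⟨2, ?_⟩
    rintro x ⟨u, rfl⟩
    have h1 : ((Finset.univ.filter (fun i : Fin N => ξ i ≤ (u : ℝ))).card : ℝ) ≤ N := by
      have := Finset.card_filter_le (Finset.univ : Finset (Fin N)) (fun i => ξ i ≤ (u : ℝ))
      simpa using (Nat.cast_le.mpr this : _ ≤ ((Finset.univ : Finset (Fin N)).card : ℝ))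
    have h2 : (0:ℝ) ≤ ((Finset.univ.filter (fun i : Fin N => ξ i ≤ (u : ℝ))).card : ℝ) :=
      Nat.cast_nonneg _
    have h3 : (N : ℝ)⁻¹ * ((Finset.univ.filter (fun i : Fin N => ξ i ≤ (u : ℝ))).card : ℝ) ≤ 1 := by
      rw [inv_mul_le_iff₀ hNR]; linarith
    have h4 : (0:ℝ) ≤ (N : ℝ)⁻¹ * ((Finset.univ.filter (fun i : Fin N => ξ i ≤ (u : ℝ))).card : ℝ) :=
      mul_nonneg (inv_nonneg.mpr hNR.le) h2
    have hu0 := u.2.1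
    have hu1 := u.2.2
    rw [abs_le]; constructor <;> linarith
  have hkey : ∀ v : ℝ, 0 ≤ v → v ≤ 1 →
      |(N : ℝ)⁻¹ * ((Finset.univ.filter (fun i : Fin N => ξ i ≤ v)).card : ℝ) - v| ≤ D :=
    fun v h0 h1 => le_ciSup hbdd (⟨v, h0, h1⟩ : Set.Icc (0:ℝ) 1)
  have hD0 : 0 ≤ D := le_trans (abs_nonneg _) (hkey 0 le_rfl zero_le_one)
  -- pointwise bound
  have hpt : ∀ u ∈ Set.Icc (0:ℝ) 1, infDist u (Set.range ξ) ≤ D := by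
    intro u hu
    set d := infDist u (Set.range ξ) with hd
    have hd0 : 0 ≤ d := infDist_nonneg
    have hdist : ∀ i, d ≤ |u - ξ i| := by
      intro i
      have := infDist_le_dist_of_mem (x := u) (Set.mem_range_self (f := ξ) i)
      rwa [Real.dist_eq] at this
    have hgap : ∀ i, ξ i ≤ u - d ∨ u + d ≤ ξ i := by
      intro i
      rcases abs_cases (u - ξ i) with ⟨h1, h2⟩ | ⟨h1, h2⟩
      · left; have := hdist i; linarith
      · right; have := hdist i; linarith
    have hd1 : d ≤ 1 := by
      have h := hdist ⟨0, hN⟩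
      have h1 := (hξ ⟨0, hN⟩).1
      have h2 := (hξ ⟨0, hN⟩).2
      rcases abs_cases (u - ξ ⟨0, hN⟩) with ⟨e1, _⟩ | ⟨e1, _⟩ <;>
        · rw [e1] at h; cases hu; linarith
    have hcount : ∀ v : ℝ, u - d ≤ v → v < u + d →
        (Finset.univ.filter (fun i : Fin N => ξ i ≤ v)) =
        (Finset.univ.filter (fun i : Fin N => ξ i ≤ u - d)) := by
      intro v h1 h2
      ext i
      simp only [Finset.mem_filter, Finset.mem_univ, true_and]
      constructor
      · intro h
        rcases hgap i with h' | h'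
        · exact h'
        · linarith
      · intro h; linarith
    set c : ℝ := ((Finset.univ.filter (fun i : Fin N => ξ i ≤ u - d)).card : ℝ) with hc
    set p : ℝ := (N : ℝ)⁻¹ * c with hp
    have hb : ∀ v : ℝ, 0 ≤ v → v ≤ 1 → u - d ≤ v → v < u + d → |p - v| ≤ D := by
      intro v h0 h1 h2 h3
      have := hkey v h0 h1
      rwa [hcount v h2 h3] at this
    by_contra hcon
    push_neg at hcon
    have hdpos : 0 < d := lt_of_le_of_lt hD0 hcon
    rcases le_or_gt u p with hpu | hpu
    · -- p ≥ u
      rcases le_or_gt 0 (u - d) with hud | hud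
      · have h := hb (u - d) hud (by cases hu; linarith) le_rfl (by linarith)
        have : d ≤ |p - (u - d)| := le_trans (by linarith) (le_abs_self _)
        linarith
      · -- u - d < 0 : no points ≤ u - d, so p = 0 and hence u = 0
        have hc0 : c = 0 := by
          rw [hc]
          norm_cast
          rw [Finset.card_eq_zero, Finset.filter_eq_empty_iff]
          intro i _
          have := (hξ i).1
          push_neg
          linarith
        have hp0 : p = 0 := by rw [hp, hc0, mul_zero]
        have hu0 : u = 0 := le_antisymm (by rw [hp0] at hpu; linarith) hu.1
        have h := hb ((D + d)/2) (by linarith) (by linarith) (by linarith) (by rw [hu0]; linarith)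
        rw [hp0] at h
        have : (D + d)/2 ≤ |0 - (D + d)/2| := by
          rw [abs_sub_comm, abs_of_nonneg (by linarith)]; linarith
        linarith
    · -- p < u
      have hud1 : u + d ≤ 1 := by
        by_contra hgt
        push_neg at hgt
        have hall : (Finset.univ.filter (fun i : Fin N => ξ i ≤ u - d)) = Finset.univ := by
          rw [Finset.filter_eq_self]
          intro i _
          rcases hgap i with h' | h'
          · exact h'
          · exact absurd (le_trans h' (hξ i).2) (by linarith)
        have : p = 1 := by
          rw [hp, hc, hall]
          simp
          field_simp
        rw [this] at hpu
        cases hu; linarith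
      have h := hb (u + (D + d)/2) (by cases hu; linarith) (by linarith) (by linarith)
        (by linarith)
      have : (D + d)/2 ≤ |p - (u + (D + d)/2)| := by
        rw [abs_sub_comm, abs_of_nonneg (by linarith)]; linarith
      linarith
  -- integrate the pointwise bound
  have hcont : Continuous fun u : ℝ => infDist u (Set.range ξ) :=
    continuous_infDist_pt _
  have hint : IntegrableOn (fun u : ℝ => infDist u (Set.range ξ)) (Set.Icc (0:ℝ) 1) :=
    hcont.integrableOn_Icc
  have hintD : IntegrableOn (fun _ : ℝ => D) (Set.Icc (0:ℝ) 1) := (integrableOn_const_iff).mpr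
    (Or.inr (by rw [Real.volume_Icc]; exact ENNReal.ofReal_lt_top))
  calc ∫ u in Set.Icc (0:ℝ) 1, infDist u (Set.range ξ)
      ≤ ∫ _ in Set.Icc (0:ℝ) 1, D :=
        setIntegral_mono_on hint hintD measurableSet_Icc hpt
    _ = D := by
        rw [setIntegral_const, Real.volume_real_Icc]
        norm_num
end

section
/- Let μ be a probability measure on ℝ with log-concave density and finite second moment supported on a compact interval [a,b]. Define Φ(x) = (K_μ((b+x)/2) - K_μ((a+x)/2)) / (F_μ((b+x)/2) - F_μ((a+x)/2)) where F_μ is the CDF and K_μ(x) = ∫_{-∞}^x ξ μ(dξ). Then the Lloyd iteration x_{n+1} = Φ(x_n), started at any x_0 ∈ (a,b), converges to the unique fixed point x* of Φ in (a,b). -/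
open MeasureTheory Metric Filter

lemma contOn_of_logconc (φ : ℝ → ℝ) (a b : ℝ) (hab : a < b)
    (hφpos : ∀ x ∈ Set.Ioo a b, 0 < φ x)
    (hlogconc : ∀ x ∈ Set.Icc a b, ∀ y ∈ Set.Icc a b, ∀ t ∈ Set.Icc (0 : ℝ) 1,
      φ x ^ t * φ y ^ (1 - t) ≤ φ (t * x + (1 - t) * y)) :
    ContinuousOn φ (Set.Ioo a b) := by
  have hconc : ConcaveOn ℝ (Set.Ioo a b) (fun x => Real.log (φ x)) := by
    refine ⟨convex_Ioo a b, ?_⟩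
    intro x hx y hy p q hp hq hpq
    have hq' : q = 1 - p := by linarith
    have hxy : p * x + q * y ∈ Set.Ioo a b := (convex_Ioo a b) hx hy hp hq hpq
    have h1 := hlogconc x (Set.Ioo_subset_Icc_self hx) y (Set.Ioo_subset_Icc_self hy) p
      ⟨hp, by linarith⟩
    rw [← hq'] at h1
    have hφx := hφpos x hx
    have hφy := hφpos y hy
    have hpos : 0 < φ x ^ p * φ y ^ q := by positivity
    calc p • Real.log (φ x) + q • Real.log (φ y)
        = Real.log (φ x ^ p * φ y ^ q) := by
          rw [Real.log_mul (by positivity) (by positivity), Real.log_rpow hφx,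
            Real.log_rpow hφy]; simp [smul_eq_mul]
      _ ≤ Real.log (φ (p * x + q * y)) := Real.log_le_log hpos h1
      _ = Real.log (φ (p • x + q • y)) := by simp [smul_eq_mul]
  have hcl : ContinuousOn (fun x => Real.log (φ x)) (Set.Ioo a b) :=
    (hconc.neg.continuousOn isOpen_Ioo).neg.congr (by intro x _; simp)
  have : ContinuousOn (fun x => Real.exp (Real.log (φ x))) (Set.Ioo a b) :=
    Real.continuous_exp.comp_continuousOn hcl
  exact this.congr fun x hx => (Real.exp_log (hφpos x hx)).symm

lemma aemeas_phi (φ : ℝ → ℝ) (a b : ℝ)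
    (hφsupp : ∀ x, x ∉ Set.Icc a b → φ x = 0)
    (hcont : ContinuousOn φ (Set.Ioo a b)) :
    AEMeasurable φ (volume : Measure ℝ) := by
  have h1 : AEMeasurable ((Set.Ioo a b).indicator φ) (volume : Measure ℝ) :=
    (aemeasurable_indicator_iff measurableSet_Ioo).2 (hcont.aemeasurable measurableSet_Ioo)
  refine h1.congr ?_
  have hsub : {x | (Set.Ioo a b).indicator φ x ≠ φ x} ⊆ {a, b} := by
    intro x hx
    by_contra hab'
    simp only [Set.mem_setOf_eq] at hx
    by_cases hm : x ∈ Set.Ioo a b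
    · exact hx (Set.indicator_of_mem hm φ)
    · apply hx
      rw [Set.indicator_of_notMem hm φ]
      refine (hφsupp x ?_).symm
      intro hic
      rcases lt_or_eq_of_le hic.1 with h | h
      · rcases lt_or_eq_of_le hic.2 with h2 | h2
        · exact hm ⟨h, h2⟩
        · exact hab' (by simp [h2])
      · exact hab' (by simp [← h])
  have hnull : (volume : Measure ℝ) {x | (Set.Ioo a b).indicator φ x ≠ φ x} = 0 :=
    measure_mono_null hsub (by
      rw [Set.insert_eq]
      exact measure_union_null (measure_singleton a) (measure_singleton b))
  exact hnull


lemma cont_Iic_integral (μ : Measure ℝ) [IsFiniteMeasure μ] (hatom : ∀ c : ℝ, μ {c} = 0)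
    (g : ℝ → ℝ) (hg : Integrable g μ) :
    Continuous (fun t => ∫ ξ in Set.Iic t, g ξ ∂μ) := by
  rw [continuous_iff_continuousAt]
  intro c
  have heq : ∀ t : ℝ, ∫ ξ in Set.Iic t, g ξ ∂μ = ∫ ξ, (Set.Iic t).indicator g ξ ∂μ :=
    fun t => (integral_indicator measurableSet_Iic).symm
  simp only [ContinuousAt, heq]
  apply tendsto_integral_filter_of_dominated_convergence (fun ξ => |g ξ|)
  · exact Eventually.of_forall fun t => hg.aestronglyMeasurable.indicator measurableSet_Iic
  · refine Eventually.of_forall fun t => Eventually.of_forall fun ξ => ?_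
    by_cases hm : ξ ∈ Set.Iic t
    · rw [Set.indicator_of_mem hm, Real.norm_eq_abs]
    · rw [Set.indicator_of_notMem hm]; simp [abs_nonneg]
  · exact hg.abs
  · have : ∀ᵐ ξ ∂μ, ξ ≠ c := by
      rw [ae_iff]; simpa using hatom c
    filter_upwards [this] with ξ hξ
    rcases lt_or_gt_of_ne hξ with h | h
    · have hev : ∀ᶠ t in nhds c, (Set.Iic t).indicator g ξ = (Set.Iic c).indicator g ξ := by
        filter_upwards [eventually_gt_nhds h] with t ht
        rw [Set.indicator_of_mem (Set.mem_Iic.2 ht.le), Set.indicator_of_mem (Set.mem_Iic.2 h.le)]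
      exact Tendsto.congr' (hev.mono fun t ht => ht.symm) tendsto_const_nhds
    · have hev : ∀ᶠ t in nhds c, (Set.Iic t).indicator g ξ = (Set.Iic c).indicator g ξ := by
        filter_upwards [eventually_lt_nhds h] with t ht
        rw [Set.indicator_of_notMem (by simpa using ht), Set.indicator_of_notMem (by simpa using h)]
      exact Tendsto.congr' (hev.mono fun t ht => ht.symm) tendsto_const_nhds


lemma meas_pos_of_sub (φ : ℝ → ℝ) (a b : ℝ)
    (hφpos : ∀ x ∈ Set.Ioo a b, 0 < φ x)
    (hmeas : AEMeasurable φ (volume : Measure ℝ))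
    (μ : Measure ℝ) (hμ : μ = MeasureTheory.volume.withDensity (fun x => ENNReal.ofReal (φ x)))
    {c d : ℝ} (hcd : c < d) (hsub : Set.Ioo c d ⊆ Set.Ioo a b) : 0 < μ (Set.Ioo c d) := by
  rw [hμ, withDensity_apply _ measurableSet_Ioo]
  rw [pos_iff_ne_zero]
  intro h0
  have hae : AEMeasurable (fun x => ENNReal.ofReal (φ x)) ((volume : Measure ℝ).restrict (Set.Ioo c d)) :=
    (ENNReal.measurable_ofReal.comp_aemeasurable hmeas).restrict
  rw [setLIntegral_eq_zero_iff' measurableSet_Ioo hae] at h0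
  rw [ae_iff] at h0
  have hset : {x | ¬(x ∈ Set.Ioo c d → ENNReal.ofReal (φ x) = 0)} = Set.Ioo c d := by
    ext x
    simp only [Set.mem_setOf_eq, Classical.not_imp]
    constructor
    · rintro ⟨hx, _⟩; exact hx
    · intro hx
      refine ⟨hx, ?_⟩
      simp [ENNReal.ofReal_eq_zero, not_le]
      exact hφpos x (hsub hx)
  rw [hset] at h0
  simp [Real.volume_Ioo] at h0
  linarith

lemma mean_bounds_weak (μ : Measure ℝ) [IsFiniteMeasure μ] (u v : ℝ)
    (hid : Integrable (fun ξ : ℝ => ξ) μ) :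
    u * (μ (Set.Ioc u v)).toReal ≤ ∫ ξ in Set.Ioc u v, ξ ∂μ ∧
      ∫ ξ in Set.Ioc u v, ξ ∂μ ≤ v * (μ (Set.Ioc u v)).toReal := by
  rcases le_or_gt u v with huv | huv
  · constructor
    · have h := setIntegral_mono_on (s := Set.Ioc u v) (integrable_const u).integrableOn
        hid.integrableOn measurableSet_Ioc (fun x hx => le_of_lt hx.1)
      simpa [mul_comm, Measure.real] using h
    · have h := setIntegral_mono_on (s := Set.Ioc u v) hid.integrableOn
        (integrable_const v).integrableOn measurableSet_Ioc (fun x hx => hx.2)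
      simpa [mul_comm, Measure.real] using h
  · simp [Set.Ioc_eq_empty (not_lt.2 huv.le)]

lemma mean_bounds_strict (μ : Measure ℝ) [IsFiniteMeasure μ] (hatom : ∀ c : ℝ, μ {c} = 0)
    (u v : ℝ) (hS : 0 < μ (Set.Ioc u v))
    (hid : Integrable (fun ξ : ℝ => ξ) μ) :
    u * (μ (Set.Ioc u v)).toReal < ∫ ξ in Set.Ioc u v, ξ ∂μ ∧
      ∫ ξ in Set.Ioc u v, ξ ∂μ < v * (μ (Set.Ioc u v)).toReal := by
  set S := Set.Ioc u v with hSdef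
  have huv : u < v := by
    by_contra h
    rw [hSdef, Set.Ioc_eq_empty h] at hS; simp at hS
  have hfin : μ S ≠ ⊤ := measure_ne_top μ S
  have hidS : IntegrableOn (fun ξ : ℝ => ξ) S μ := hid.integrableOn
  constructor
  · -- lower strict : ∫ (ξ - u) > 0
    have hnn : 0 ≤ᵐ[μ.restrict S] fun ξ : ℝ => ξ - u := by
      filter_upwards [ae_restrict_mem measurableSet_Ioc] with ξ hξ
      simp [sub_nonneg]; exact hξ.1.le
    have hint : Integrable (fun ξ : ℝ => ξ - u) (μ.restrict S) := hidS.sub (integrable_const u)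
    have hpos : 0 < ∫ ξ in S, (ξ - u) ∂μ := by
      rcases lt_or_eq_of_le (integral_nonneg_of_ae hnn) with h | h
      · exact h
      · exfalso
        have hz := (integral_eq_zero_iff_of_nonneg_ae hnn hint).1 h.symm
        have : (μ.restrict S) {x : ℝ | x - u ≠ 0} = 0 := by
          have := ae_iff.1 hz
          simpa using this
        have hmono : μ S ≤ (μ.restrict S) {x : ℝ | x - u ≠ 0} := by
          have : μ.restrict S S ≤ (μ.restrict S) {x : ℝ | x - u ≠ 0} := by
            apply measure_mono
            intro x hx
            simp only [Set.mem_setOf_eq, sub_ne_zero]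
            exact ne_of_gt hx.1
          simpa [Measure.restrict_apply_self] using this
        rw [this] at hmono
        exact absurd (le_antisymm hmono zero_le) (ne_of_gt hS)
    have := integral_sub hidS (integrable_const u)
    rw [this] at hpos
    simp only [integral_const, measureReal_restrict_apply_univ, Measure.real, Measure.restrict_apply_univ, smul_eq_mul] at hpos
    linarith
  · -- upper strict
    have hnn : 0 ≤ᵐ[μ.restrict S] fun ξ : ℝ => v - ξ := by
      filter_upwards [ae_restrict_mem measurableSet_Ioc] with ξ hξ
      simp [sub_nonneg]; exact hξ.2
    have hint : Integrable (fun ξ : ℝ => v - ξ) (μ.restrict S) := (integrable_const v).sub hidS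
    have hpos : 0 < ∫ ξ in S, (v - ξ) ∂μ := by
      rcases lt_or_eq_of_le (integral_nonneg_of_ae hnn) with h | h
      · exact h
      · exfalso
        have hz := (integral_eq_zero_iff_of_nonneg_ae hnn hint).1 h.symm
        have h1 : (μ.restrict S) {x : ℝ | v - x ≠ 0} = 0 := by
          have := ae_iff.1 hz
          simpa using this
        have hmono : μ (S \ {v}) ≤ (μ.restrict S) {x : ℝ | v - x ≠ 0} := by
          have hms : MeasurableSet {x : ℝ | v - x ≠ 0} := by
            have : {x : ℝ | v - x ≠ 0} = {v}ᶜ := by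
              ext x; simp [sub_ne_zero, eq_comm]
            rw [this]; exact (measurableSet_singleton v).compl
          rw [Measure.restrict_apply hms]
          apply measure_mono
          rintro x ⟨hx1, hx2⟩
          refine ⟨?_, hx1⟩
          simp only [Set.mem_setOf_eq, sub_ne_zero]
          intro h
          exact hx2 (by simp [h.symm])
        rw [h1] at hmono
        have hSv : μ S ≤ μ (S \ {v}) + μ {v} := by
          have : S ⊆ (S \ {v}) ∪ {v} := by
            intro x hx; by_cases h : x = v
            · right; simp [h]
            · left; exact ⟨hx, by simp [h]⟩
          exact (measure_mono this).trans (measure_union_le _ _)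
        rw [hatom v, add_zero] at hSv
        have : μ S = 0 := le_antisymm (hSv.trans hmono) zero_le
        exact absurd this (ne_of_gt hS)
    have := integral_sub (integrable_const v) hidS
    rw [this] at hpos
    simp only [integral_const, measureReal_restrict_apply_univ, Measure.real, Measure.restrict_apply_univ, smul_eq_mul] at hpos
    linarith


lemma split_meas (μ : Measure ℝ) [IsFiniteMeasure μ] {u v : ℝ} (huv : u ≤ v) :
    (μ (Set.Iic v)).toReal - (μ (Set.Iic u)).toReal = (μ (Set.Ioc u v)).toReal := by
  have h : μ (Set.Iic v) = μ (Set.Iic u) + μ (Set.Ioc u v) := by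
    rw [← Set.Iic_union_Ioc_eq_Iic huv]
    exact measure_union (Set.Iic_disjoint_Ioc le_rfl) measurableSet_Ioc
  rw [h, ENNReal.toReal_add (measure_ne_top _ _) (measure_ne_top _ _)]
  ring

lemma split_int (μ : Measure ℝ) [IsFiniteMeasure μ] (hid : Integrable (fun ξ : ℝ => ξ) μ)
    {u v : ℝ} (huv : u ≤ v) :
    (∫ ξ in Set.Iic v, ξ ∂μ) - ∫ ξ in Set.Iic u, ξ ∂μ = ∫ ξ in Set.Ioc u v, ξ ∂μ := by
  have h : ∫ ξ in Set.Iic v, ξ ∂μ = (∫ ξ in Set.Iic u, ξ ∂μ) + ∫ ξ in Set.Ioc u v, ξ ∂μ := by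
    rw [← Set.Iic_union_Ioc_eq_Iic huv]
    exact setIntegral_union (Set.Iic_disjoint_Ioc le_rfl) measurableSet_Ioc
      hid.integrableOn hid.integrableOn
  rw [h]; ring

lemma mean_split_left (μ : Measure ℝ) [IsFiniteMeasure μ] (hid : Integrable (fun ξ : ℝ => ξ) μ)
    {u c v : ℝ} (huc : u ≤ c) (hcv : c ≤ v) (hM : 0 < μ (Set.Ioc c v)) :
    (∫ ξ in Set.Ioc u v, ξ ∂μ) / (μ (Set.Ioc u v)).toReal ≤
      (∫ ξ in Set.Ioc c v, ξ ∂μ) / (μ (Set.Ioc c v)).toReal := by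
  have hsplit : Set.Ioc u c ∪ Set.Ioc c v = Set.Ioc u v := Set.Ioc_union_Ioc_eq_Ioc huc hcv
  have hJ : ∫ ξ in Set.Ioc u v, ξ ∂μ =
      (∫ ξ in Set.Ioc u c, ξ ∂μ) + ∫ ξ in Set.Ioc c v, ξ ∂μ := by
    rw [← hsplit]
    exact setIntegral_union (Set.Ioc_disjoint_Ioc_of_le le_rfl) measurableSet_Ioc
      hid.integrableOn hid.integrableOn
  have hD : (μ (Set.Ioc u v)).toReal = (μ (Set.Ioc u c)).toReal + (μ (Set.Ioc c v)).toReal := by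
    rw [← hsplit, measure_union (Set.Ioc_disjoint_Ioc_of_le le_rfl) measurableSet_Ioc,
      ENNReal.toReal_add (measure_ne_top _ _) (measure_ne_top _ _)]
  set JL := ∫ ξ in Set.Ioc u c, ξ ∂μ
  set JM := ∫ ξ in Set.Ioc c v, ξ ∂μ
  set DL := (μ (Set.Ioc u c)).toReal
  set DM := (μ (Set.Ioc c v)).toReal
  have hDL : 0 ≤ DL := ENNReal.toReal_nonneg
  have hDM : 0 < DM := ENNReal.toReal_pos (ne_of_gt hM) (measure_ne_top _ _)
  have hJL : JL ≤ c * DL := (mean_bounds_weak μ u c hid).2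
  have hJM : c * DM ≤ JM := (mean_bounds_weak μ c v hid).1
  rw [hJ, hD]
  rw [div_le_div_iff₀ (by linarith) hDM]
  have key : JL * DM ≤ JM * DL := by
    calc JL * DM ≤ c * DL * DM := by nlinarith
      _ = (c * DM) * DL := by ring
      _ ≤ JM * DL := by nlinarith
  nlinarith

lemma mean_split_right (μ : Measure ℝ) [IsFiniteMeasure μ] (hid : Integrable (fun ξ : ℝ => ξ) μ)
    {u c v : ℝ} (huc : u ≤ c) (hcv : c ≤ v) (hM : 0 < μ (Set.Ioc u c)) :
    (∫ ξ in Set.Ioc u c, ξ ∂μ) / (μ (Set.Ioc u c)).toReal ≤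
      (∫ ξ in Set.Ioc u v, ξ ∂μ) / (μ (Set.Ioc u v)).toReal := by
  have hsplit : Set.Ioc u c ∪ Set.Ioc c v = Set.Ioc u v := Set.Ioc_union_Ioc_eq_Ioc huc hcv
  have hJ : ∫ ξ in Set.Ioc u v, ξ ∂μ =
      (∫ ξ in Set.Ioc u c, ξ ∂μ) + ∫ ξ in Set.Ioc c v, ξ ∂μ := by
    rw [← hsplit]
    exact setIntegral_union (Set.Ioc_disjoint_Ioc_of_le le_rfl) measurableSet_Ioc
      hid.integrableOn hid.integrableOn
  have hD : (μ (Set.Ioc u v)).toReal = (μ (Set.Ioc u c)).toReal + (μ (Set.Ioc c v)).toReal := by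
    rw [← hsplit, measure_union (Set.Ioc_disjoint_Ioc_of_le le_rfl) measurableSet_Ioc,
      ENNReal.toReal_add (measure_ne_top _ _) (measure_ne_top _ _)]
  set JM := ∫ ξ in Set.Ioc u c, ξ ∂μ
  set JR := ∫ ξ in Set.Ioc c v, ξ ∂μ
  set DM := (μ (Set.Ioc u c)).toReal
  set DR := (μ (Set.Ioc c v)).toReal
  have hDR : 0 ≤ DR := ENNReal.toReal_nonneg
  have hDM : 0 < DM := ENNReal.toReal_pos (ne_of_gt hM) (measure_ne_top _ _)
  have hJM : JM ≤ c * DM := (mean_bounds_weak μ u c hid).2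
  have hJR : c * DR ≤ JR := (mean_bounds_weak μ c v hid).1
  rw [hJ, hD]
  rw [div_le_div_iff₀ hDM (by linarith)]
  nlinarith

lemma mean_mono (μ : Measure ℝ) [IsFiniteMeasure μ] (hid : Integrable (fun ξ : ℝ => ξ) μ)
    {u1 v1 u2 v2 : ℝ} (hu : u1 ≤ u2) (hv : v1 ≤ v2) (huv1 : u1 ≤ v1) (huv2 : u2 ≤ v2)
    (hD1 : 0 < μ (Set.Ioc u1 v1)) (hD2 : 0 < μ (Set.Ioc u2 v2))
    (hM : u2 < v1 → 0 < μ (Set.Ioc u2 v1)) :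
    (∫ ξ in Set.Ioc u1 v1, ξ ∂μ) / (μ (Set.Ioc u1 v1)).toReal ≤
      (∫ ξ in Set.Ioc u2 v2, ξ ∂μ) / (μ (Set.Ioc u2 v2)).toReal := by
  rcases lt_or_ge u2 v1 with h | h
  · calc (∫ ξ in Set.Ioc u1 v1, ξ ∂μ) / (μ (Set.Ioc u1 v1)).toReal
        ≤ (∫ ξ in Set.Ioc u2 v1, ξ ∂μ) / (μ (Set.Ioc u2 v1)).toReal :=
          mean_split_left μ hid hu h.le (hM h)
      _ ≤ _ := mean_split_right μ hid h.le hv (hM h)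
  · have hD1' : 0 < (μ (Set.Ioc u1 v1)).toReal := ENNReal.toReal_pos (ne_of_gt hD1) (measure_ne_top _ _)
    have hD2' : 0 < (μ (Set.Ioc u2 v2)).toReal := ENNReal.toReal_pos (ne_of_gt hD2) (measure_ne_top _ _)
    have h1 : (∫ ξ in Set.Ioc u1 v1, ξ ∂μ) / (μ (Set.Ioc u1 v1)).toReal ≤ v1 := by
      rw [div_le_iff₀ hD1']
      exact (mean_bounds_weak μ u1 v1 hid).2.trans (by rw [mul_comm])
    have h2 : u2 ≤ (∫ ξ in Set.Ioc u2 v2, ξ ∂μ) / (μ (Set.Ioc u2 v2)).toReal := by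
      rw [le_div_iff₀ hD2']
      have := (mean_bounds_weak μ u2 v2 hid).1
      linarith [this]
    linarith


lemma logconc_pair (φ : ℝ → ℝ) (a b : ℝ)
    (hφpos : ∀ x ∈ Set.Ioo a b, 0 < φ x)
    (hlogconc : ∀ x ∈ Set.Icc a b, ∀ y ∈ Set.Icc a b, ∀ t ∈ Set.Icc (0 : ℝ) 1,
      φ x ^ t * φ y ^ (1 - t) ≤ φ (t * x + (1 - t) * y))
    {η ξ δ : ℝ} (hδ : 0 ≤ δ) (hle : η ≤ ξ)
    (h1 : η ∈ Set.Ioo a b) (h2 : ξ + δ ∈ Set.Ioo a b)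
    (h3 : ξ ∈ Set.Ioo a b) (h4 : η + δ ∈ Set.Ioo a b) :
    φ (ξ + δ) * φ η ≤ φ (η + δ) * φ ξ := by
  rcases eq_or_lt_of_le hδ with hδ0 | hδ0
  · rw [← hδ0]; simp [mul_comm]
  have hL : 0 < ξ - η + δ := by linarith
  set t := (ξ - η) / (ξ - η + δ) with ht
  have ht0 : 0 ≤ t := div_nonneg (by linarith) hL.le
  have ht1 : t ≤ 1 := (div_le_one hL).2 (by linarith)
  have htm : t ∈ Set.Icc (0:ℝ) 1 := ⟨ht0, ht1⟩
  have htm' : 1 - t ∈ Set.Icc (0:ℝ) 1 := ⟨by linarith, by linarith⟩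
  have hc1 : t * (ξ + δ) + (1 - t) * η = ξ := by
    rw [ht]; field_simp; ring
  have hc2 : (1 - t) * (ξ + δ) + (1 - (1 - t)) * η = η + δ := by
    have : 1 - t = δ / (ξ - η + δ) := by
      rw [ht]; field_simp; ring
    rw [this]; field_simp; ring
  have hA := hlogconc (ξ + δ) (Set.Ioo_subset_Icc_self h2) η (Set.Ioo_subset_Icc_self h1) t htm
  have hB := hlogconc (ξ + δ) (Set.Ioo_subset_Icc_self h2) η (Set.Ioo_subset_Icc_self h1)
    (1 - t) htm'
  rw [hc1] at hA
  rw [hc2] at hB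
  have hpx : 0 < φ (ξ + δ) := hφpos _ h2
  have hpe : 0 < φ η := hφpos _ h1
  have key : (φ (ξ + δ) ^ t * φ η ^ (1 - t)) * (φ (ξ + δ) ^ (1 - t) * φ η ^ (1 - (1 - t)))
      = φ (ξ + δ) * φ η := by
    rw [show (1 : ℝ) - (1 - t) = t by ring]
    rw [show (φ (ξ + δ) ^ t * φ η ^ (1 - t)) * (φ (ξ + δ) ^ (1 - t) * φ η ^ t)
      = (φ (ξ + δ) ^ t * φ (ξ + δ) ^ (1 - t)) * (φ η ^ (1 - t) * φ η ^ t) by ring]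
    rw [← Real.rpow_add hpx, ← Real.rpow_add hpe]
    norm_num
  calc φ (ξ + δ) * φ η
      = (φ (ξ + δ) ^ t * φ η ^ (1 - t)) * (φ (ξ + δ) ^ (1 - t) * φ η ^ (1 - (1 - t))) := key.symm
    _ ≤ φ ξ * φ (η + δ) := by
        apply mul_le_mul hA hB (by positivity) (le_of_lt (hφpos _ h3))
    _ = φ (η + δ) * φ ξ := mul_comm _ _


lemma setint_density (φ : ℝ → ℝ) (hφ0 : ∀ x, 0 ≤ φ x)
    (hmeas : AEMeasurable φ (volume : Measure ℝ))
    (μ : Measure ℝ) (hμ : μ = MeasureTheory.volume.withDensity (fun x => ENNReal.ofReal (φ x)))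
    {S : Set ℝ} (hS : MeasurableSet S) (g : ℝ → ℝ) :
    ∫ ξ in S, g ξ ∂μ = ∫ ξ in S, φ ξ * g ξ := by
  rw [hμ]
  have h1 : (MeasureTheory.volume.withDensity fun x => ENNReal.ofReal (φ x)).restrict S
      = (MeasureTheory.volume.restrict S).withDensity (fun x => ((φ x).toNNReal : ENNReal)) := by
    rw [restrict_withDensity hS]
    rfl
  rw [show ∫ ξ in S, g ξ ∂(MeasureTheory.volume.withDensity fun x => ENNReal.ofReal (φ x))
    = ∫ ξ, g ξ ∂((MeasureTheory.volume.withDensity fun x => ENNReal.ofReal (φ x)).restrict S) from rfl]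
  rw [h1]
  have hf : AEMeasurable (fun x => (φ x).toNNReal) (MeasureTheory.volume.restrict S) :=
    measurable_real_toNNReal.comp_aemeasurable hmeas.restrict
  rw [integral_withDensity_eq_integral_smul₀ hf g]
  apply integral_congr_ae
  filter_upwards with ξ
  rw [NNReal.smul_def, Real.coe_toNNReal _ (hφ0 ξ), smul_eq_mul]

lemma meas_density (φ : ℝ → ℝ) (hφ0 : ∀ x, 0 ≤ φ x)
    (hmeas : AEMeasurable φ (volume : Measure ℝ))
    (μ : Measure ℝ) [IsFiniteMeasure μ]
    (hμ : μ = MeasureTheory.volume.withDensity (fun x => ENNReal.ofReal (φ x)))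
    {S : Set ℝ} (hS : MeasurableSet S) :
    (μ S).toReal = ∫ ξ in S, φ ξ := by
  have h := setint_density φ hφ0 hmeas μ hμ hS (fun _ => (1:ℝ))
  simp only [mul_one] at h
  rw [← h, setIntegral_const, smul_eq_mul, mul_one]; rfl


lemma mean_shift_le (φ : ℝ → ℝ) (a b : ℝ) (hφ0 : ∀ x, 0 ≤ φ x)
    (hφpos : ∀ x ∈ Set.Ioo a b, 0 < φ x)
    (hlogconc : ∀ x ∈ Set.Icc a b, ∀ y ∈ Set.Icc a b, ∀ t ∈ Set.Icc (0 : ℝ) 1,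
      φ x ^ t * φ y ^ (1 - t) ≤ φ (t * x + (1 - t) * y))
    (hcont : ContinuousOn φ (Set.Ioo a b))
    (hmeas : AEMeasurable φ (volume : Measure ℝ))
    (μ : Measure ℝ) [IsFiniteMeasure μ]
    (hμ : μ = MeasureTheory.volume.withDensity (fun x => ENNReal.ofReal (φ x)))
    {u v δ : ℝ} (hδ : 0 < δ) (huv : u < v) (hin : Set.Icc u (v + δ) ⊆ Set.Ioo a b) :
    (∫ ξ in Set.Ioc (u + δ) (v + δ), ξ ∂μ) / (μ (Set.Ioc (u + δ) (v + δ))).toReal ≤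
      (∫ ξ in Set.Ioc u v, ξ ∂μ) / (μ (Set.Ioc u v)).toReal + δ := by
  set S := Set.Ioc u v with hSdef
  set S2 := Set.Ioc (u + δ) (v + δ) with hS2def
  set g : ℝ → ℝ := fun ξ => φ (ξ + δ) with hgdef
  have hSsub : S ⊆ Set.Ioo a b := fun x hx => hin ⟨hx.1.le, by linarith [hx.2]⟩
  have hSsub2 : ∀ x ∈ S, x + δ ∈ Set.Ioo a b := fun x hx =>
    hin ⟨by linarith [hx.1], by linarith [hx.2]⟩
  have hSm : MeasurableSet S := measurableSet_Ioc
  have hS2m : MeasurableSet S2 := measurableSet_Ioc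
  -- bounds
  obtain ⟨C, hC⟩ := (isCompact_Icc (a := u) (b := v + δ)).exists_bound_of_continuousOn
    (hcont.mono hin)
  have hBd : ∃ B : ℝ, ∀ x ∈ S, |x| ≤ B := ⟨max |u| |v|, fun x hx => by
    rcases abs_le.1 (le_refl |x|) with _
    have h1 : x ≤ v := hx.2
    have h2 : u < x := hx.1
    rcases le_total 0 x with h | h
    · rw [abs_of_nonneg h]; exact le_trans h1 ((le_abs_self v).trans (le_max_right _ _))
    · rw [abs_of_nonpos h]
      exact le_trans (by linarith [neg_le_abs u]) (le_max_left |u| |v|)⟩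
  obtain ⟨B, hB⟩ := hBd
  have hφS : ∀ x ∈ S, ‖φ x‖ ≤ C := fun x hx =>
    hC x ⟨hx.1.le, by linarith [hx.2]⟩
  have hgS : ∀ x ∈ S, ‖g x‖ ≤ C := fun x hx =>
    hC (x + δ) ⟨by linarith [hx.1], by linarith [hx.2]⟩
  -- measurability
  have hmg : AEMeasurable g (volume : Measure ℝ) := by
    obtain ⟨m, hmm, hme⟩ := hmeas
    refine ⟨fun x => m (x + δ), hmm.comp (measurable_add_const δ), ?_⟩
    have hnull : volume {x : ℝ | φ x ≠ m x} = 0 := ae_iff.1 hme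
    have hpre : {x : ℝ | φ (x + δ) ≠ m (x + δ)} = (fun x => x + δ) ⁻¹' {x : ℝ | φ x ≠ m x} :=
      rfl
    rw [Filter.EventuallyEq, ae_iff]
    show volume {x : ℝ | ¬ φ (x + δ) = m (x + δ)} = 0
    rw [show {x : ℝ | ¬ φ (x + δ) = m (x + δ)} = (fun x => x + δ) ⁻¹' {x : ℝ | φ x ≠ m x} from rfl]
    rw [measure_preimage_add_right]
    exact hnull
  have hvolS : volume S ≠ ⊤ := by
    rw [hSdef, Real.volume_Ioc]; exact ENNReal.ofReal_ne_top
  have hfi : IntegrableOn φ S volume :=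
    Measure.integrableOn_of_bounded hvolS hmeas.aestronglyMeasurable
      ((ae_restrict_mem hSm).mono fun x hx => hφS x hx)
  have hgi : IntegrableOn g S volume :=
    Measure.integrableOn_of_bounded hvolS hmg.aestronglyMeasurable
      ((ae_restrict_mem hSm).mono fun x hx => hgS x hx)
  have hxfi : IntegrableOn (fun ξ => ξ * φ ξ) S volume :=
    Measure.integrableOn_of_bounded hvolS
      ((aemeasurable_id.mul hmeas).aestronglyMeasurable)
      ((ae_restrict_mem hSm).mono fun x hx => by
        rw [Real.norm_eq_abs, abs_mul]
        have h1 := hB x hx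
        have h2 := hφS x hx
        rw [Real.norm_eq_abs] at h2
        have hBnn : 0 ≤ B := le_trans (abs_nonneg _) h1
        have : |x| * |φ x| ≤ B * C := by
          apply mul_le_mul h1 h2 (abs_nonneg _) hBnn
        exact this)
  have hxgi : IntegrableOn (fun ξ => ξ * g ξ) S volume :=
    Measure.integrableOn_of_bounded hvolS
      ((aemeasurable_id.mul hmg).aestronglyMeasurable)
      ((ae_restrict_mem hSm).mono fun x hx => by
        rw [Real.norm_eq_abs, abs_mul]
        have h1 := hB x hx
        have h2 := hgS x hx
        rw [Real.norm_eq_abs] at h2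
        have hBnn : 0 ≤ B := le_trans (abs_nonneg _) h1
        exact mul_le_mul h1 h2 (abs_nonneg _) hBnn)
  -- correlation inequality
  have hcorr : (∫ ξ in S, ξ * g ξ) * (∫ ξ in S, φ ξ) ≤
      (∫ ξ in S, ξ * φ ξ) * (∫ ξ in S, g ξ) := by
    set ν := volume.restrict S with hνdef
    set P := ν.prod ν with hPdef
    set F : ℝ × ℝ → ℝ := fun z => (z.1 * g z.1) * φ z.2 with hF
    set Fs : ℝ × ℝ → ℝ := fun z => φ z.1 * (z.2 * g z.2) with hFs
    set G : ℝ × ℝ → ℝ := fun z => (z.1 * φ z.1) * g z.2 with hG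
    set Gs : ℝ × ℝ → ℝ := fun z => g z.1 * (z.2 * φ z.2) with hGs
    have hFi : Integrable F P := hxgi.mul_prod hfi
    have hFsi : Integrable Fs P := hfi.mul_prod hxgi
    have hGi : Integrable G P := hxfi.mul_prod hgi
    have hGsi : Integrable Gs P := hgi.mul_prod hxfi
    have hae : ∀ᵐ z ∂P, z.1 ∈ S ∧ z.2 ∈ S := by
      have hP : P = (volume.prod volume).restrict (S ×ˢ S) := by
        rw [hPdef, hνdef, Measure.prod_restrict]
      rw [hP]
      exact (ae_restrict_mem (hSm.prod hSm)).mono fun z hz => ⟨hz.1, hz.2⟩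
    have hmono : ∫ z, (F z + Fs z) ∂P ≤ ∫ z, (G z + Gs z) ∂P := by
      apply integral_mono_ae (hFi.add hFsi) (hGi.add hGsi)
      filter_upwards [hae] with z hz
      obtain ⟨h1, h2⟩ := hz
      set ξ := z.1
      set η := z.2
      rcases le_total η ξ with hle | hle
      · have hkey := logconc_pair φ a b hφpos hlogconc hδ.le hle (hSsub h2)
          (hSsub2 ξ h1) (hSsub h1) (hSsub2 η h2)
        simp only [Pi.add_apply, hF, hFs, hG, hGs, hgdef]
        nlinarith [mul_nonneg (sub_nonneg.2 hle) (sub_nonneg.2 hkey)]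
      · have hkey := logconc_pair φ a b hφpos hlogconc hδ.le hle (hSsub h1)
          (hSsub2 η h2) (hSsub h2) (hSsub2 ξ h1)
        simp only [Pi.add_apply, hF, hFs, hG, hGs, hgdef]
        nlinarith [mul_nonneg (sub_nonneg.2 hle) (sub_nonneg.2 hkey)]
    rw [integral_add hFi hFsi, integral_add hGi hGsi] at hmono
    have e1 : ∫ z, F z ∂P = (∫ ξ in S, ξ * g ξ) * (∫ ξ in S, φ ξ) :=
      integral_prod_mul (fun ξ => ξ * g ξ) φ
    have e2 : ∫ z, Fs z ∂P = (∫ ξ in S, φ ξ) * (∫ ξ in S, ξ * g ξ) :=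
      integral_prod_mul φ (fun ξ => ξ * g ξ)
    have e3 : ∫ z, G z ∂P = (∫ ξ in S, ξ * φ ξ) * (∫ ξ in S, g ξ) :=
      integral_prod_mul (fun ξ => ξ * φ ξ) g
    have e4 : ∫ z, Gs z ∂P = (∫ ξ in S, g ξ) * (∫ ξ in S, ξ * φ ξ) :=
      integral_prod_mul g (fun ξ => ξ * φ ξ)
    rw [e1, e2, e3, e4] at hmono
    nlinarith [hmono]
  -- change of variables
  have hcv : ∀ h : ℝ → ℝ, ∫ ξ in S2, h ξ = ∫ ξ in S, h (ξ + δ) := by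
    intro h
    rw [← integral_indicator hS2m, ← integral_indicator hSm]
    rw [← integral_add_right_eq_self (fun x => S2.indicator h x) δ]
    congr 1
    funext x
    by_cases hx : x ∈ S
    · rw [Set.indicator_of_mem hx]
      have : x + δ ∈ S2 := ⟨by linarith [hx.1], by linarith [hx.2]⟩
      rw [Set.indicator_of_mem this]
    · rw [Set.indicator_of_notMem hx]
      have : x + δ ∉ S2 := by
        intro hc
        exact hx ⟨by linarith [hc.1], by linarith [hc.2]⟩
      rw [Set.indicator_of_notMem this]
  -- densities
  have hJ1 : ∫ ξ in S, ξ ∂μ = ∫ ξ in S, φ ξ * ξ :=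
    setint_density φ hφ0 hmeas μ hμ hSm (fun ξ => ξ)
  have hD1 : (μ S).toReal = ∫ ξ in S, φ ξ := meas_density φ hφ0 hmeas μ hμ hSm
  have hJ2 : ∫ ξ in S2, ξ ∂μ = ∫ ξ in S2, φ ξ * ξ :=
    setint_density φ hφ0 hmeas μ hμ hS2m (fun ξ => ξ)
  have hD2 : (μ S2).toReal = ∫ ξ in S2, φ ξ := meas_density φ hφ0 hmeas μ hμ hS2m
  have hD2' : (μ S2).toReal = ∫ ξ in S, g ξ := by rw [hD2, hcv φ]
  have hJ2' : ∫ ξ in S2, ξ ∂μ = (∫ ξ in S, ξ * g ξ) + δ * ∫ ξ in S, g ξ := by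
    rw [hJ2, hcv (fun ξ => φ ξ * ξ)]
    have : ∀ ξ : ℝ, φ (ξ + δ) * (ξ + δ) = ξ * g ξ + δ * g ξ := fun ξ => by
      simp only [hgdef]; ring
    rw [show (∫ ξ in S, φ (ξ + δ) * (ξ + δ)) = ∫ ξ in S, (ξ * g ξ + δ * g ξ) by
      apply integral_congr_ae; filter_upwards with ξ; exact this ξ]
    rw [integral_add hxgi (hgi.const_mul δ), MeasureTheory.integral_const_mul]
  -- positivity of denominators
  have hpos1 : 0 < ∫ ξ in S, φ ξ := by
    rw [← hD1]
    apply ENNReal.toReal_pos _ (measure_ne_top _ _)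
    have h1 : 0 < μ (Set.Ioo u v) := by
      apply meas_pos_of_sub φ a b hφpos hmeas μ hμ huv
      exact fun x hx => hSsub ⟨hx.1, hx.2.le⟩
    exact fun h0 => absurd (le_antisymm (h0 ▸ measure_mono Set.Ioo_subset_Ioc_self) zero_le)
      (ne_of_gt h1)
  have hpos2 : 0 < ∫ ξ in S, g ξ := by
    rw [← hD2']
    apply ENNReal.toReal_pos _ (measure_ne_top _ _)
    have h1 : 0 < μ (Set.Ioo (u + δ) (v + δ)) := by
      apply meas_pos_of_sub φ a b hφpos hmeas μ hμ (by linarith)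
      intro x hx
      exact hin ⟨by linarith [hx.1], hx.2.le⟩
    exact fun h0 => absurd (le_antisymm (h0 ▸ measure_mono Set.Ioo_subset_Ioc_self) zero_le)
      (ne_of_gt h1)
  -- final computation
  rw [hJ2', hD2', hD1, hJ1]
  rw [show (∫ ξ in S, φ ξ * ξ) = ∫ ξ in S, ξ * φ ξ by
    apply integral_congr_ae; filter_upwards with ξ; ring]
  have h1 : ((∫ ξ in S, ξ * g ξ) + δ * ∫ ξ in S, g ξ) / (∫ ξ in S, g ξ)
      = (∫ ξ in S, ξ * g ξ) / (∫ ξ in S, g ξ) + δ := by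
    field_simp
  rw [h1]
  have h2 : (∫ ξ in S, ξ * g ξ) / (∫ ξ in S, g ξ)
      ≤ (∫ ξ in S, ξ * φ ξ) / (∫ ξ in S, φ ξ) := by
    rw [div_le_div_iff₀ hpos2 hpos1]
    nlinarith [hcorr]
  linarith

theorem stmt_15 (φ : ℝ → ℝ) (a b : ℝ) (hab : a < b)
    (hφ0 : ∀ x, 0 ≤ φ x) (hφpos : ∀ x ∈ Set.Ioo a b, 0 < φ x)
    (hφsupp : ∀ x, x ∉ Set.Icc a b → φ x = 0)
    (hlogconc : ∀ x ∈ Set.Icc a b, ∀ y ∈ Set.Icc a b, ∀ t ∈ Set.Icc (0 : ℝ) 1,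
      φ x ^ t * φ y ^ (1 - t) ≤ φ (t * x + (1 - t) * y))
    (μ : Measure ℝ) [IsProbabilityMeasure μ]
    (hμ : μ = MeasureTheory.volume.withDensity (fun x => ENNReal.ofReal (φ x)))
    (hmom : Integrable (fun x : ℝ => x ^ 2) μ)
    (Φ : ℝ → ℝ)
    (hΦ : ∀ y : ℝ, Φ y =
      ((∫ ξ in Set.Iic ((b + y) / 2), ξ ∂μ) - ∫ ξ in Set.Iic ((a + y) / 2), ξ ∂μ) /
        ((μ (Set.Iic ((b + y) / 2))).toReal - (μ (Set.Iic ((a + y) / 2))).toReal))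
    (x : ℕ → ℝ) (hx0 : x 0 ∈ Set.Ioo a b)
    (hiter : ∀ n : ℕ, x (n + 1) = Φ (x n)) :
    ∃ xs ∈ Set.Ioo a b, Φ xs = xs ∧ (∀ y ∈ Set.Ioo a b, Φ y = y → y = xs) ∧
      Tendsto x atTop (nhds xs) := by
  have hcont : ContinuousOn φ (Set.Ioo a b) := contOn_of_logconc φ a b hab hφpos hlogconc
  have hmeas : AEMeasurable φ (volume : Measure ℝ) := aemeas_phi φ a b hφsupp hcont
  have hac : μ ≪ volume := hμ ▸ withDensity_absolutelyContinuous _ _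
  have hatom : ∀ c : ℝ, μ {c} = 0 := fun c => hac (measure_singleton c)
  have hid : Integrable (fun ξ : ℝ => ξ) μ := by
    refine Integrable.mono' ((integrable_const (1:ℝ)).add hmom) aestronglyMeasurable_id ?_
    filter_upwards with ξ
    simp only [Pi.add_apply]
    rw [Real.norm_eq_abs]
    nlinarith [sq_nonneg (|ξ| - 1), sq_abs ξ]
  set mA : ℝ → ℝ := fun y => (a + y) / 2 with hmA
  set mB : ℝ → ℝ := fun y => (b + y) / 2 with hmB
  have hmAB : ∀ y : ℝ, mA y ≤ mB y := fun y => by simp [hmA, hmB]; linarith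
  have hΦ' : ∀ y : ℝ, Φ y =
      (∫ ξ in Set.Ioc (mA y) (mB y), ξ ∂μ) / (μ (Set.Ioc (mA y) (mB y))).toReal := by
    intro y
    rw [hΦ y, split_int μ hid (hmAB y), split_meas μ (hmAB y)]
  have hIooSub : ∀ y ∈ Set.Icc a b, Set.Ioo (mA y) (mB y) ⊆ Set.Ioo a b := by
    intro y hy ξ hξ
    simp only [hmA, hmB, Set.mem_Ioo] at hξ ⊢
    constructor
    · have : a ≤ (a + y)/2 := by have := hy.1; linarith
      linarith [hξ.1]
    · have : (b + y)/2 ≤ b := by have := hy.2; linarith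
      linarith [hξ.2]
  have hDpos : ∀ y ∈ Set.Icc a b, 0 < μ (Set.Ioc (mA y) (mB y)) := by
    intro y hy
    have h1 : 0 < μ (Set.Ioo (mA y) (mB y)) := by
      apply meas_pos_of_sub φ a b hφpos hmeas μ hμ
        (by simp [hmA, hmB]; linarith) (hIooSub y hy)
    exact lt_of_lt_of_le h1 (measure_mono Set.Ioo_subset_Ioc_self)
  have hDpos' : ∀ y ∈ Set.Icc a b, 0 < (μ (Set.Ioc (mA y) (mB y))).toReal :=
    fun y hy => ENNReal.toReal_pos (ne_of_gt (hDpos y hy)) (measure_ne_top _ _)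
  -- range of Φ
  have hΦmem : ∀ y ∈ Set.Icc a b, Φ y ∈ Set.Ioo (mA y) (mB y) := by
    intro y hy
    obtain ⟨h1, h2⟩ := mean_bounds_strict μ hatom (mA y) (mB y) (hDpos y hy) hid
    rw [hΦ' y]
    constructor
    · rw [lt_div_iff₀ (hDpos' y hy)]
      linarith
    · rw [div_lt_iff₀ (hDpos' y hy)]
      linarith
  have hΦIoo : ∀ y ∈ Set.Icc a b, Φ y ∈ Set.Ioo a b := by
    intro y hy
    obtain ⟨h1, h2⟩ := hΦmem y hy
    constructor
    · calc a ≤ mA y := by simp only [hmA]; linarith [hy.1]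
        _ < Φ y := h1
    · calc Φ y < mB y := h2
        _ ≤ b := by simp only [hmB]; linarith [hy.2]
  -- monotonicity of Φ on [a,b]
  have hΦmono : ∀ y ∈ Set.Icc a b, ∀ z ∈ Set.Icc a b, y ≤ z → Φ y ≤ Φ z := by
    intro y hy z hz hyz
    rw [hΦ' y, hΦ' z]
    apply mean_mono μ hid (by simp only [hmA]; linarith) (by simp only [hmB]; linarith)
      (hmAB y) (hmAB z) (hDpos y hy) (hDpos z hz)
    intro hlt
    have h1 : 0 < μ (Set.Ioo (mA z) (mB y)) := by
      apply meas_pos_of_sub φ a b hφpos hmeas μ hμ hlt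
      intro ξ hξ
      constructor
      · have : a ≤ mA z := by simp only [hmA]; linarith [hz.1]
        linarith [hξ.1]
      · have : mB y ≤ b := by simp only [hmB]; linarith [hy.2]
        linarith [hξ.2]
    exact lt_of_lt_of_le h1 (measure_mono Set.Ioo_subset_Ioc_self)
  -- continuity of Φ on [a,b]
  have hKcont : Continuous (fun t => ∫ ξ in Set.Iic t, ξ ∂μ) :=
    cont_Iic_integral μ hatom (fun ξ => ξ) hid
  have hFcont : Continuous (fun t => (μ (Set.Iic t)).toReal) := by
    have heq : (fun t => (μ (Set.Iic t)).toReal) = fun t => ∫ ξ in Set.Iic t, (1:ℝ) ∂μ := by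
      funext t
      rw [setIntegral_const, smul_eq_mul, mul_one]; rfl
    rw [heq]
    exact cont_Iic_integral μ hatom (fun _ => (1:ℝ)) (integrable_const 1)
  have hΦcont : ∀ y ∈ Set.Icc a b, ContinuousAt Φ y := by
    intro y hy
    have hΦeq : Φ = fun y => ((∫ ξ in Set.Iic ((b + y) / 2), ξ ∂μ)
        - ∫ ξ in Set.Iic ((a + y) / 2), ξ ∂μ) /
        ((μ (Set.Iic ((b + y) / 2))).toReal - (μ (Set.Iic ((a + y) / 2))).toReal) :=
      funext fun y => hΦ y
    rw [hΦeq]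
    have hcb : Continuous (fun y : ℝ => (b + y) / 2) := (continuous_const.add continuous_id).div_const 2
    have hca : Continuous (fun y : ℝ => (a + y) / 2) := (continuous_const.add continuous_id).div_const 2
    apply ContinuousAt.div
    · exact ((hKcont.comp hcb).sub (hKcont.comp hca)).continuousAt
    · exact ((hFcont.comp hcb).sub (hFcont.comp hca)).continuousAt
    · show (μ (Set.Iic ((b + y) / 2))).toReal - (μ (Set.Iic ((a + y) / 2))).toReal ≠ 0
      have := split_meas μ (hmAB y)
      simp only [hmA, hmB] at this
      rw [this]
      exact ne_of_gt (by simpa [hmA, hmB] using hDpos' y hy)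
  -- uniqueness of fixed points in (a,b)
  have huniq : ∀ y ∈ Set.Ioo a b, ∀ z ∈ Set.Ioo a b, Φ y = y → Φ z = z → y = z := by
    have key : ∀ y ∈ Set.Ioo a b, ∀ z ∈ Set.Ioo a b, Φ y = y → Φ z = z → y < z → False := by
      intro y hy z hz hfy hfz hyz
      set δ := (z - y) / 2 with hδdef
      have hδ : 0 < δ := by simp [hδdef]; linarith
      have huv : mA y < mB y := by simp only [hmA, hmB]; linarith
      have hin : Set.Icc (mA y) (mB y + δ) ⊆ Set.Ioo a b := by
        intro ξ hξ
        constructor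
        · have : a < mA y := by simp only [hmA]; linarith [hy.1]
          linarith [hξ.1]
        · have : mB y + δ < b := by simp only [hmB, hδdef]; linarith [hz.2]
          linarith [hξ.2]
      have hms := mean_shift_le φ a b hφ0 hφpos hlogconc hcont hmeas μ hμ hδ huv hin
      have hAz : mA z = mA y + δ := by simp only [hmA, hδdef]; ring
      have hBz : mB z = mB y + δ := by simp only [hmB, hδdef]; ring
      rw [← hAz, ← hBz, ← hΦ' z, ← hΦ' y] at hms
      rw [hfy, hfz] at hms
      simp only [hδdef] at hms
      linarith
    intro y hy z hz hfy hfz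
    rcases lt_trichotomy y z with h | h | h
    · exact absurd (key y hy z hz hfy hfz h) (fun hf => hf)
    · exact h
    · exact absurd (key z hz y hy hfz hfy h) (fun hf => hf)
  -- sequence membership
  have hxmem : ∀ n, x n ∈ Set.Ioo a b := by
    intro n
    induction n with
    | zero => exact hx0
    | succ n ih =>
      rw [hiter n]
      exact hΦIoo (x n) (Set.Ioo_subset_Icc_self ih)
  -- main case analysis
  rcases le_total (x 0) (x 1) with hc | hc
  · -- increasing case
    have hmon : Monotone x := by
      apply monotone_nat_of_le_succ
      intro n
      induction n with
      | zero => exact hc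
      | succ n ih =>
        have h := hΦmono (x n) (Set.Ioo_subset_Icc_self (hxmem n))
          (x (n+1)) (Set.Ioo_subset_Icc_self (hxmem (n+1))) ih
        rw [← hiter n, ← hiter (n+1)] at h
        exact h
    have hbdd : BddAbove (Set.range x) := ⟨b, by
      rintro _ ⟨n, rfl⟩
      exact (hxmem n).2.le⟩
    set xs := ⨆ n, x n with hxs
    have hlim : Tendsto x atTop (nhds xs) := tendsto_atTop_ciSup hmon hbdd
    have hxs_ge : x 0 ≤ xs := le_ciSup hbdd 0
    have hxs_le : xs ≤ b := ciSup_le fun n => (hxmem n).2.le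
    have hxsIcc : xs ∈ Set.Icc a b := ⟨le_trans hx0.1.le hxs_ge, hxs_le⟩
    have hfix : Φ xs = xs := by
      have h1 : Tendsto (fun n => Φ (x n)) atTop (nhds (Φ xs)) :=
        ((hΦcont xs hxsIcc).tendsto).comp hlim
      have h2 : Tendsto (fun n => x (n + 1)) atTop (nhds xs) :=
        hlim.comp (tendsto_add_atTop_nat 1)
      have h3 : (fun n => x (n + 1)) = fun n => Φ (x n) := funext fun n => hiter n
      rw [h3] at h2
      exact tendsto_nhds_unique h1 h2
    have hxsmem : xs ∈ Set.Ioo a b := by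
      constructor
      · exact lt_of_lt_of_le hx0.1 hxs_ge
      · rcases lt_or_eq_of_le hxs_le with h | h
        · exact h
        · exfalso
          have := hΦmem xs hxsIcc
          rw [hfix, h] at this
          have : b < mB b := this.2
          simp only [hmB] at this
          linarith
    exact ⟨xs, hxsmem, hfix, fun y hy hfy => huniq y hy xs hxsmem hfy hfix, hlim⟩
  · -- decreasing case
    have hmon : Antitone x := by
      apply antitone_nat_of_succ_le
      intro n
      induction n with
      | zero => exact hc
      | succ n ih =>
        have h := hΦmono (x (n+1)) (Set.Ioo_subset_Icc_self (hxmem (n+1)))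
          (x n) (Set.Ioo_subset_Icc_self (hxmem n)) ih
        rw [← hiter n, ← hiter (n+1)] at h
        exact h
    have hbdd : BddBelow (Set.range x) := ⟨a, by
      rintro _ ⟨n, rfl⟩
      exact (hxmem n).1.le⟩
    set xs := ⨅ n, x n with hxs
    have hlim : Tendsto x atTop (nhds xs) := tendsto_atTop_ciInf hmon hbdd
    have hxs_le : xs ≤ x 0 := ciInf_le hbdd 0
    have hxs_ge : a ≤ xs := le_ciInf fun n => (hxmem n).1.le
    have hxsIcc : xs ∈ Set.Icc a b := ⟨hxs_ge, le_trans hxs_le hx0.2.le⟩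
    have hfix : Φ xs = xs := by
      have h1 : Tendsto (fun n => Φ (x n)) atTop (nhds (Φ xs)) :=
        ((hΦcont xs hxsIcc).tendsto).comp hlim
      have h2 : Tendsto (fun n => x (n + 1)) atTop (nhds xs) :=
        hlim.comp (tendsto_add_atTop_nat 1)
      have h3 : (fun n => x (n + 1)) = fun n => Φ (x n) := funext fun n => hiter n
      rw [h3] at h2
      exact tendsto_nhds_unique h1 h2
    have hxsmem : xs ∈ Set.Ioo a b := by
      constructor
      · rcases lt_or_eq_of_le hxs_ge with h | h
        · exact h
        · exfalso
          have := hΦmem xs hxsIcc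
          rw [hfix, ← h] at this
          have : mA a < a := this.1
          simp only [hmA] at this
          linarith
      · exact lt_of_le_of_lt hxs_le hx0.2
    exact ⟨xs, hxsmem, hfix, fun y hy hfy => huniq y hy xs hxsmem hfy hfix, hlim⟩
end

section
/- Let X ∈ L^2(ℝ^d) with strongly continuous law μ (assigning zero mass to every hyperplane) with convex support, let a^{(N-1)} be a fixed finite set, and let (a_{[n]}) be the greedy Lloyd iteration a_{[n+1]} = E[X | X ∈ W_{[n]}], where W_{[n]} is the closed Voronoi cell of a_{[n]} in a^{(N-1)} ∪ {a_{[n]}}, started at a_{[0]} ∉ a^{(N-1)} in the support. Then the sequence G(a_{[n]}) = E[d(X, a^{(N-1)} ∪ {a_{[n]}})^2] is non-increasing, strictly decreasing at every non-stationary point, and converges to a finite limit ℓ² ≥ e_{2,N}(μ)². -/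
open MeasureTheory Metric Filter
open scoped RealInnerProductSpace

/-- The support of a measure: points all of whose neighbourhoods have positive mass. -/
def measSupport {E : Type*} [MeasurableSpace E] [PseudoMetricSpace E] (μ : Measure E) : Set E :=
  {x | ∀ r : ℝ, 0 < r → 0 < μ (Metric.ball x r)}

lemma isClosed_measSupport {E : Type*} [MeasurableSpace E] [PseudoMetricSpace E]
    (μ : Measure E) : IsClosed (measSupport μ) := by
  rw [← isOpen_compl_iff, Metric.isOpen_iff]
  intro x hx
  simp only [measSupport, Set.mem_compl_iff, Set.mem_setOf_eq, not_forall, not_lt,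
    nonpos_iff_eq_zero] at hx
  obtain ⟨r, hr, hr0⟩ := hx
  refine ⟨r / 2, by linarith, fun y hy => ?_⟩
  simp only [measSupport, Set.mem_compl_iff, Set.mem_setOf_eq, not_forall, not_lt,
    nonpos_iff_eq_zero]
  refine ⟨r / 2, by linarith, le_antisymm (le_trans (measure_mono ?_) hr0.le) (by simp)⟩
  intro z hz
  have : dist z x < r := by
    calc dist z x ≤ dist z y + dist y x := dist_triangle _ _ _
    _ < r / 2 + r / 2 := by
        exact add_lt_add (Metric.mem_ball.1 hz) (Metric.mem_ball.1 hy)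
    _ = r := by ring
  exact Metric.mem_ball.2 this

lemma measSupport_compl_null {E : Type*} [MeasurableSpace E] [MetricSpace E]
    [SecondCountableTopology E] [OpensMeasurableSpace E]
    (μ : Measure E) : μ (measSupport μ)ᶜ = 0 := by
  refine measure_null_of_locally_null _ fun x hx => ?_
  simp only [measSupport, Set.mem_compl_iff, Set.mem_setOf_eq, not_forall, not_lt,
    nonpos_iff_eq_zero] at hx
  obtain ⟨r, hr, hr0⟩ := hx
  exact ⟨Metric.ball x r, mem_nhdsWithin_of_mem_nhds (Metric.ball_mem_nhds x hr), hr0⟩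

theorem stmt_16 {d : ℕ}
    (μ : Measure (EuclideanSpace ℝ (Fin d))) [IsProbabilityMeasure μ]
    (hL2 : Integrable (fun x => ‖x‖ ^ 2) μ)
    (hcont : ∀ (v : EuclideanSpace ℝ (Fin d)) (c : ℝ), v ≠ 0 →
      μ {x | (inner ℝ v x : ℝ) = c} = 0)
    (hconv : Convex ℝ (measSupport μ))
    (Γ : Finset (EuclideanSpace ℝ (Fin d)))
    (a : ℕ → EuclideanSpace ℝ (Fin d))
    (ha0 : a 0 ∈ measSupport μ ∧ a 0 ∉ Γ)
    (W : ℕ → Set (EuclideanSpace ℝ (Fin d)))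
    (hW : ∀ n, W n = {x | ∀ g ∈ Γ, ‖x - a n‖ ≤ ‖x - g‖})
    (hiter : ∀ n, a (n + 1) = (μ (W n)).toReal⁻¹ • ∫ x in W n, x ∂μ) :
    let G : ℕ → ℝ := fun n =>
      ∫ x, infDist x (insert (a n) (↑Γ : Set (EuclideanSpace ℝ (Fin d)))) ^ 2 ∂μ
    (∀ n, G (n + 1) ≤ G n) ∧
    (∀ n, a n ≠ (μ (W n)).toReal⁻¹ • ∫ x in W n, x ∂μ → G (n + 1) < G n) ∧
    ∃ ℓ : ℝ, Tendsto G atTop (nhds ℓ) ∧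
      sInf {v : ℝ | ∃ S : Finset (EuclideanSpace ℝ (Fin d)), S.Nonempty ∧
          S.card ≤ Γ.card + 1 ∧
          v = ∫ x, infDist x (↑S : Set (EuclideanSpace ℝ (Fin d))) ^ 2 ∂μ} ≤ ℓ := by
  intro G
  -- Integrability facts
  have hInt1 : ∀ b : EuclideanSpace ℝ (Fin d), Integrable (fun x => ‖x - b‖ ^ 2) μ := by
    intro b
    refine Integrable.mono' ((hL2.const_mul 2).add (integrable_const (2 * ‖b‖ ^ 2)))
      ((continuous_id.sub continuous_const).norm.pow 2).aestronglyMeasurable ?_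
    filter_upwards with x
    simp only [Pi.add_apply]
    rw [Real.norm_eq_abs, abs_of_nonneg (by positivity)]
    have h1 : ‖x - b‖ ≤ ‖x‖ + ‖b‖ := norm_sub_le _ _
    nlinarith [sq_nonneg (‖x‖ - ‖b‖), pow_le_pow_left₀ (norm_nonneg (x - b)) h1 2]
  have hIntD : ∀ n : ℕ, Integrable
      (fun x => infDist x (insert (a n) (↑Γ : Set (EuclideanSpace ℝ (Fin d)))) ^ 2) μ := by
    intro n
    refine Integrable.mono' (hInt1 (a n))
      ((continuous_infDist_pt _).pow 2).aestronglyMeasurable ?_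
    filter_upwards with x
    rw [Real.norm_eq_abs, abs_of_nonneg (by positivity)]
    have h1 : infDist x (insert (a n) (↑Γ : Set (EuclideanSpace ℝ (Fin d)))) ≤ ‖x - a n‖ := by
      simpa [dist_eq_norm] using infDist_le_dist_of_mem (Set.mem_insert (a n) (↑Γ : Set (EuclideanSpace ℝ (Fin d))))
    have h2 : (0:ℝ) ≤ infDist x (insert (a n) (↑Γ : Set (EuclideanSpace ℝ (Fin d)))) := infDist_nonneg
    nlinarith
  have hIntId : Integrable (fun x : EuclideanSpace ℝ (Fin d) => x) μ := by
    refine Integrable.mono' ((integrable_const (1:ℝ)).add hL2)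
      continuous_id.aestronglyMeasurable ?_
    filter_upwards with x
    simp only [Pi.add_apply, Real.norm_eq_abs]
    nlinarith [sq_nonneg (‖x‖ - 1), norm_nonneg x]
  -- W n facts
  have hWclosed : ∀ n, IsClosed (W n) := by
    intro n
    rw [hW n]
    have : {x : EuclideanSpace ℝ (Fin d) | ∀ g ∈ Γ, ‖x - a n‖ ≤ ‖x - g‖}
        = ⋂ g ∈ Γ, {x : EuclideanSpace ℝ (Fin d) | ‖x - a n‖ ≤ ‖x - g‖} := by
      ext x; simp
    rw [this]
    exact isClosed_biInter fun g _ => isClosed_le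
      (continuous_id.sub continuous_const).norm (continuous_id.sub continuous_const).norm
  have hWmeas : ∀ n, MeasurableSet (W n) := fun n => (hWclosed n).measurableSet
  -- ball inside W n
  have hWball : ∀ n, ∃ r > (0:ℝ), Metric.ball (a n) r ⊆ W n := by
    intro n
    set U : Set (EuclideanSpace ℝ (Fin d)) := ⋂ g ∈ Γ, {x : EuclideanSpace ℝ (Fin d) | g ≠ a n → ‖x - a n‖ < ‖x - g‖} with hU
    have hUopen : IsOpen U := by
      refine isOpen_biInter_finset fun g hg => ?_
      by_cases h : g = a n
      · simp [h]
      · have : {x : EuclideanSpace ℝ (Fin d) | g ≠ a n → ‖x - a n‖ < ‖x - g‖}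
            = {x : EuclideanSpace ℝ (Fin d) | ‖x - a n‖ < ‖x - g‖} := by
          ext x; simp [h]
        rw [this]
        exact isOpen_lt (continuous_id.sub continuous_const).norm
          (continuous_id.sub continuous_const).norm
    have haU : a n ∈ U := by
      simp only [hU, Set.mem_iInter, Set.mem_setOf_eq]
      intro g hg hgne
      simpa [sub_eq_zero] using (norm_sub_pos_iff.2 (Ne.symm hgne))
    have hUW : U ⊆ W n := by
      intro x hx
      rw [hW n]
      intro g hg
      by_cases h : g = a n
      · subst h; exact le_refl _
      · exact le_of_lt ((Set.mem_iInter₂.1 hx g hg) h)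
    obtain ⟨r, hr, hrU⟩ := Metric.isOpen_iff.1 hUopen (a n) haU
    exact ⟨r, hr, hrU.trans hUW⟩
  have hpos_of_mem : ∀ n, a n ∈ measSupport μ → 0 < μ (W n) := by
    intro n hn
    obtain ⟨r, hr, hsub⟩ := hWball n
    exact lt_of_lt_of_le (hn r hr) (measure_mono hsub)
  have hsuppae : ∀ᵐ x ∂μ, x ∈ measSupport μ := by
    rw [ae_iff]
    exact measSupport_compl_null μ
  -- all iterates in the support
  have hsupp : ∀ n, a n ∈ measSupport μ := by
    intro n
    induction n with
    | zero => exact ha0.1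
    | succ n ih =>
      have hpos := hpos_of_mem n ih
      rw [hiter n]; change (μ.real (W n))⁻¹ • _ ∈ _; rw [← setAverage_eq]
      exact hconv.set_average_mem (isClosed_measSupport μ) hpos.ne' (measure_ne_top μ _)
        (ae_restrict_of_ae hsuppae) hIntId.integrableOn
  have hWpos : ∀ n, 0 < μ (W n) := fun n => hpos_of_mem n (hsupp n)
  have htR : ∀ n, 0 < (μ (W n)).toReal :=
    fun n => ENNReal.toReal_pos (hWpos n).ne' (measure_ne_top μ _)
  -- bias-variance identity
  have hkey : ∀ n (b : EuclideanSpace ℝ (Fin d)), ∫ x in W n, ‖x - b‖ ^ 2 ∂μ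
      = (∫ x in W n, ‖x - a (n+1)‖ ^ 2 ∂μ) + (μ (W n)).toReal * ‖a (n+1) - b‖ ^ 2 := by
    intro n b
    set m := a (n + 1) with hm
    have hmean : ∫ x in W n, x ∂μ = (μ (W n)).toReal • m := by
      rw [hm, hiter n, smul_smul, mul_inv_cancel₀ (htR n).ne', one_smul]
    have hsubInt : Integrable (fun x : EuclideanSpace ℝ (Fin d) => x - m)
        (μ.restrict (W n)) :=
      hIntId.integrableOn.sub (integrableOn_const (measure_ne_top μ _))
    have hzero : ∫ x in W n, (x - m) ∂μ = 0 := by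
      rw [integral_sub hIntId.integrableOn
        (integrableOn_const (measure_ne_top μ _))]
      rw [hmean, setIntegral_const, Measure.real, sub_self]
    have hptw : ∀ x : EuclideanSpace ℝ (Fin d), ‖x - b‖ ^ 2
        = ‖x - m‖ ^ 2 + (2 * ⟪m - b, x - m⟫ + ‖m - b‖ ^ 2) := by
      intro x
      have hd : x - b = (x - m) + (m - b) := by abel
      rw [hd, norm_add_sq_real, real_inner_comm]
      ring
    have hinner : ∫ x in W n, ⟪m - b, x - m⟫ ∂μ = 0 := by
      rw [integral_inner hsubInt, hzero, inner_zero_right]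
    have hIi : Integrable (fun x => 2 * ⟪m - b, x - m⟫ + ‖m - b‖ ^ 2)
        (μ.restrict (W n)) :=
      ((hsubInt.const_inner _).const_mul 2).add (integrable_const _)
    calc ∫ x in W n, ‖x - b‖ ^ 2 ∂μ
        = ∫ x in W n, (‖x - m‖ ^ 2 + (2 * ⟪m - b, x - m⟫ + ‖m - b‖ ^ 2)) ∂μ :=
          integral_congr_ae (Filter.Eventually.of_forall hptw)
      _ = (∫ x in W n, ‖x - m‖ ^ 2 ∂μ)
            + ∫ x in W n, (2 * ⟪m - b, x - m⟫ + ‖m - b‖ ^ 2) ∂μ :=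
          integral_add (hInt1 m).integrableOn hIi
      _ = (∫ x in W n, ‖x - m‖ ^ 2 ∂μ) + (μ (W n)).toReal * ‖m - b‖ ^ 2 := by
          rw [integral_add ((hsubInt.const_inner _).const_mul 2) (integrable_const _),
            integral_const_mul, hinner, setIntegral_const, Measure.real, smul_eq_mul]
          ring
  -- pointwise facts on the distance function
  have h_le : ∀ (k : ℕ) (x : EuclideanSpace ℝ (Fin d)), infDist x (insert (a k) (↑Γ : Set (EuclideanSpace ℝ (Fin d)))) ≤ ‖x - a k‖ := by
    intro k x
    simpa [dist_eq_norm] using infDist_le_dist_of_mem (Set.mem_insert (a k) (↑Γ : Set (EuclideanSpace ℝ (Fin d))))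
  have hcpt : ∀ k : ℕ, IsCompact (insert (a k) (↑Γ : Set (EuclideanSpace ℝ (Fin d)))) :=
    fun k => (Γ.finite_toSet.insert (a k)).isCompact
  have h_onW : ∀ n, ∀ x ∈ W n, infDist x (insert (a n) (↑Γ : Set (EuclideanSpace ℝ (Fin d)))) = ‖x - a n‖ := by
    intro n x hx
    refine le_antisymm (h_le n x) ?_
    obtain ⟨y, hy, hdy⟩ := (hcpt n).exists_infDist_eq_dist
      ⟨a n, Set.mem_insert _ _⟩ x
    rw [hdy, dist_eq_norm]
    rcases hy with hy | hy
    · rw [hy]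
    · rw [hW n] at hx; exact hx y hy
  have h_offW : ∀ n k, ∀ x ∉ W n,
      infDist x (insert (a k) (↑Γ : Set (EuclideanSpace ℝ (Fin d)))) ≤ infDist x (insert (a n) (↑Γ : Set (EuclideanSpace ℝ (Fin d)))) := by
    intro n k x hx
    rw [hW n] at hx
    simp only [Set.mem_setOf_eq, not_forall] at hx
    obtain ⟨g, hg, hgx⟩ := hx
    push_neg at hgx
    have hΓne : (↑Γ : Set (EuclideanSpace ℝ (Fin d))).Nonempty := ⟨g, hg⟩
    have h1 : infDist x (insert (a k) (↑Γ : Set (EuclideanSpace ℝ (Fin d)))) ≤ infDist x (↑Γ : Set (EuclideanSpace ℝ (Fin d))) :=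
      infDist_le_infDist_of_subset (Set.subset_insert _ _) hΓne
    refine h1.trans ?_
    obtain ⟨y, hy, hdy⟩ := (hcpt n).exists_infDist_eq_dist ⟨a n, Set.mem_insert _ _⟩ x
    rcases hy with hy | hy
    · exfalso
      have : infDist x (insert (a n) (↑Γ : Set (EuclideanSpace ℝ (Fin d)))) ≤ dist x g :=
        infDist_le_dist_of_mem (Set.mem_insert_of_mem _ hg)
      rw [hdy, hy] at this
      rw [dist_eq_norm, dist_eq_norm] at this
      linarith
    · rw [hdy]
      exact infDist_le_dist_of_mem hy
  -- split formula for G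
  have hGdef : ∀ k, G k
      = ∫ x, infDist x (insert (a k) (↑Γ : Set (EuclideanSpace ℝ (Fin d)))) ^ 2 ∂μ :=
    fun k => rfl
  have hG_split : ∀ n, G n = (∫ x in W n, ‖x - a n‖ ^ 2 ∂μ)
      + ∫ x in (W n)ᶜ,
          infDist x (insert (a n) (↑Γ : Set (EuclideanSpace ℝ (Fin d)))) ^ 2 ∂μ := by
    intro n
    rw [hGdef n, ← integral_add_compl (hWmeas n) (hIntD n)]
    congr 1
    exact setIntegral_congr_fun (hWmeas n) fun x hx => by rw [h_onW n x hx]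
  have hGsucc : ∀ n, G (n+1) ≤ (∫ x in W n, ‖x - a (n+1)‖ ^ 2 ∂μ)
      + ∫ x in (W n)ᶜ,
          infDist x (insert (a n) (↑Γ : Set (EuclideanSpace ℝ (Fin d)))) ^ 2 ∂μ := by
    intro n
    rw [hGdef (n+1), ← integral_add_compl (hWmeas n) (hIntD (n+1))]
    refine add_le_add ?_ ?_
    · refine setIntegral_mono_on (hIntD (n+1)).integrableOn (hInt1 _).integrableOn
        (hWmeas n) fun x hx => ?_
      exact pow_le_pow_left₀ infDist_nonneg (h_le (n+1) x) 2
    · refine setIntegral_mono_on (hIntD (n+1)).integrableOn (hIntD n).integrableOn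
        (hWmeas n).compl fun x hx => ?_
      exact pow_le_pow_left₀ infDist_nonneg (h_offW n (n+1) x hx) 2
  have hdiff : ∀ n, G (n+1) + (μ (W n)).toReal * ‖a (n+1) - a n‖ ^ 2 ≤ G n := by
    intro n
    have hk := hkey n (a n)
    have h2 := hGsucc n
    rw [hG_split n, hk]
    linarith
  have hmono : ∀ n, G (n+1) ≤ G n := by
    intro n
    have h1 := hdiff n
    nlinarith [mul_nonneg (htR n).le (sq_nonneg ‖a (n+1) - a n‖)]
  have hstrict : ∀ n, a n ≠ (μ (W n)).toReal⁻¹ • ∫ x in W n, x ∂μ → G (n+1) < G n := by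
    intro n hne
    have hane : a (n+1) ≠ a n := fun h => hne (by rw [← h, hiter n])
    have hpos : 0 < (μ (W n)).toReal * ‖a (n+1) - a n‖ ^ 2 :=
      mul_pos (htR n) (pow_pos (norm_pos_iff.2 (sub_ne_zero.2 hane)) 2)
    linarith [hdiff n]
  refine ⟨hmono, hstrict, ⟨⨅ n, G n, ?_, ?_⟩⟩
  · refine tendsto_atTop_ciInf (antitone_nat_of_succ_le hmono) ⟨0, ?_⟩
    rintro v ⟨n, rfl⟩
    exact integral_nonneg fun x => sq_nonneg _
  · haveI : DecidableEq (EuclideanSpace ℝ (Fin d)) := Classical.decEq _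
    refine le_ciInf fun n => csInf_le ⟨0, ?_⟩ ?_
    · rintro v ⟨S, -, -, rfl⟩
      exact integral_nonneg fun x => sq_nonneg _
    · exact ⟨insert (a n) Γ, Finset.insert_nonempty _ _, Finset.card_insert_le _ _,
        by rw [hGdef n, Finset.coe_insert]⟩
end

section
/- Let X ∈ L^2(ℝ^d) with non-degenerate law, a^{(N-1)} a finite set, and let (a_{[n]}) be the greedy Lloyd iteration started at a_{[0]} in the support of the law with E[d(X, a^{(N-1)} ∪ {a_{[0]}})²] < E[d(X, a^{(N-1)})²]. Then the sequence (a_{[n]}) is bounded. -/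
open MeasureTheory Metric

section Aux

open scoped RealInnerProductSpace

lemma infDist_insert_min {α : Type*} [PseudoMetricSpace α] {s : Set α} (hs : s.Nonempty)
    (b x : α) : infDist x (insert b s) = min (dist x b) (infDist x s) := by
  obtain ⟨g, hg⟩ := hs
  have h2 : infEDist x s ≠ ⊤ :=
    ne_top_of_le_ne_top (edist_ne_top x g) (EMetric.infEdist_le_edist_of_mem hg)
  rw [infDist, infDist, Set.insert_eq, EMetric.infEdist_union, EMetric.infEdist_singleton,
    ENNReal.toReal_inf (edist_ne_top _ _) h2, dist_edist]

lemma norm_sq_sub_norm_sq {F : Type*} [NormedAddCommGroup F] [InnerProductSpace ℝ F]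
    (u v : F) : ‖u‖ ^ 2 - ‖v‖ ^ 2 = ⟪u - v, u + v⟫ := by
  rw [inner_sub_left, inner_add_right, inner_add_right, real_inner_self_eq_norm_sq,
    real_inner_self_eq_norm_sq, real_inner_comm v u]
  ring

/-- The barycenter minimizes the mean squared distance. -/
lemma centroid_opt {F : Type*} [NormedAddCommGroup F] [InnerProductSpace ℝ F]
    [CompleteSpace F] [MeasurableSpace F] [BorelSpace F]
    (ν : Measure F) [IsFiniteMeasure ν] (hId : Integrable (fun x : F => x) ν)
    {b c : F} (hb : Integrable (fun x => ‖x - b‖ ^ 2) ν)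
    (hc : Integrable (fun x => ‖x - c‖ ^ 2) ν)
    (hc_def : c = (ν Set.univ).toReal⁻¹ • ∫ x, x ∂ν) :
    ∫ x, ‖x - c‖ ^ 2 ∂ν ≤ ∫ x, ‖x - b‖ ^ 2 ∂ν := by
  rcases eq_or_ne (ν Set.univ) 0 with h0 | h0
  · rw [Measure.measure_univ_eq_zero.mp h0]
    simp
  set m : ℝ := (ν Set.univ).toReal with hm_def
  have hm : 0 < m := ENNReal.toReal_pos h0 (measure_ne_top ν _)
  have hintx : ∫ x, x ∂ν = m • c := by
    rw [hc_def, smul_smul, mul_inv_cancel₀ hm.ne', one_smul]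
  have hib : Integrable (fun x : F => x - b) ν := hId.sub (integrable_const b)
  have hic : Integrable (fun x : F => x - c) ν := hId.sub (integrable_const c)
  have hint2 : Integrable (fun x => (x - b) + (x - c)) ν := hib.add hic
  have key : ∫ x, (‖x - b‖ ^ 2 - ‖x - c‖ ^ 2) ∂ν = m * ‖c - b‖ ^ 2 := by
    have hpt : ∀ x : F, ‖x - b‖ ^ 2 - ‖x - c‖ ^ 2 = ⟪c - b, (x - b) + (x - c)⟫ := by
      intro x
      rw [norm_sq_sub_norm_sq]
      congr 1
      abel
    calc ∫ x, (‖x - b‖ ^ 2 - ‖x - c‖ ^ 2) ∂ν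
        = ∫ x, ⟪c - b, (x - b) + (x - c)⟫ ∂ν := by
          exact integral_congr_ae (Filter.Eventually.of_forall hpt)
      _ = ⟪c - b, ∫ x, ((x - b) + (x - c)) ∂ν⟫ := integral_inner hint2 _
      _ = m * ‖c - b‖ ^ 2 := by
          have : ∫ x, ((x - b) + (x - c)) ∂ν = m • (c - b) := by
            rw [integral_add hib hic,
              integral_sub hId (integrable_const b), integral_sub hId (integrable_const c),
              integral_const, integral_const, hintx]
            rw [measureReal_def, ← hm_def]
            rw [smul_sub]
            abel
          rw [this, real_inner_smul_right, real_inner_self_eq_norm_sq]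
  have := integral_sub hb hc
  rw [key] at this
  nlinarith [this, mul_nonneg hm.le (sq_nonneg ‖c - b‖)]

end Aux

theorem stmt_17 {d : ℕ}
    (μ : Measure (EuclideanSpace ℝ (Fin d))) [IsProbabilityMeasure μ]
    (hL2 : Integrable (fun x => ‖x‖ ^ 2) μ)
    (hnd : ∀ x : EuclideanSpace ℝ (Fin d), μ ≠ Measure.dirac x)
    (Γ : Finset (EuclideanSpace ℝ (Fin d))) (hΓ : Γ.Nonempty)
    (a : ℕ → EuclideanSpace ℝ (Fin d))
    (ha0 : a 0 ∈ measSupport μ)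
    (W : ℕ → Set (EuclideanSpace ℝ (Fin d)))
    (hW : ∀ n, W n = {x | ∀ g ∈ Γ, ‖x - a n‖ ≤ ‖x - g‖})
    (hiter : ∀ n, a (n + 1) = (μ (W n)).toReal⁻¹ • ∫ x in W n, x ∂μ)
    (hdec : ∫ x, infDist x (insert (a 0) (↑Γ : Set (EuclideanSpace ℝ (Fin d)))) ^ 2 ∂μ
      < ∫ x, infDist x (↑Γ : Set (EuclideanSpace ℝ (Fin d))) ^ 2 ∂μ) :
    ∃ R : ℝ, ∀ n, ‖a n‖ ≤ R := by
  obtain ⟨g0, hg0⟩ := hΓ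
  have hΓne : (↑Γ : Set (EuclideanSpace ℝ (Fin d))).Nonempty := ⟨g0, by exact_mod_cast hg0⟩
  set dΓ : (EuclideanSpace ℝ (Fin d)) → ℝ := fun x => infDist x (↑Γ : Set (EuclideanSpace ℝ (Fin d))) with hdΓ
  -- Basic integrability facts
  have hgint : Integrable (fun x : (EuclideanSpace ℝ (Fin d)) => 1 + ‖x‖ ^ 2) μ := (integrable_const 1).add hL2
  have hIntNorm : Integrable (fun x : (EuclideanSpace ℝ (Fin d)) => ‖x‖) μ := by
    refine Integrable.mono' hgint
      continuous_norm.aestronglyMeasurable (Filter.Eventually.of_forall fun x => ?_)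
    simp only [norm_norm]
    nlinarith [norm_nonneg x, sq_nonneg (‖x‖ - 1)]
  have hIntId : Integrable (fun x : (EuclideanSpace ℝ (Fin d)) => x) μ := by
    refine Integrable.mono' hIntNorm continuous_id.aestronglyMeasurable
      (Filter.Eventually.of_forall fun x => le_refl _)
  have hIntsq : ∀ b : (EuclideanSpace ℝ (Fin d)), Integrable (fun x => ‖x - b‖ ^ 2) μ := by
    intro b
    have hg2 : Integrable (fun x : (EuclideanSpace ℝ (Fin d)) => (‖x‖ ^ 2 + 2 * ‖b‖ * ‖x‖) + ‖b‖ ^ 2) μ :=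
      (hL2.add (hIntNorm.const_mul (2 * ‖b‖))).add (integrable_const (‖b‖ ^ 2))
    refine Integrable.mono' hg2
      (((continuous_id.sub continuous_const).norm.pow 2)).aestronglyMeasurable
      (Filter.Eventually.of_forall fun x => ?_)
    have h1 : ‖x - b‖ ≤ ‖x‖ + ‖b‖ := norm_sub_le x b
    have h2 : (0:ℝ) ≤ ‖x - b‖ := norm_nonneg _
    simp only [Real.norm_eq_abs, abs_of_nonneg (sq_nonneg ‖x - b‖), Pi.add_apply]
    nlinarith [norm_nonneg x, norm_nonneg b]
  have hdΓ_cont : Continuous dΓ := continuous_infDist_pt _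
  have hdΓ_nonneg : ∀ x, 0 ≤ dΓ x := fun x => infDist_nonneg
  have hdΓ_le : ∀ x, dΓ x ≤ ‖x - g0‖ := fun x => by
    rw [← dist_eq_norm]; exact infDist_le_dist_of_mem (by exact_mod_cast hg0)
  have hIntdΓsq : Integrable (fun x => dΓ x ^ 2) μ := by
    refine Integrable.mono' (hIntsq g0) ((hdΓ_cont.pow 2)).aestronglyMeasurable
      (Filter.Eventually.of_forall fun x => ?_)
    simp only [Real.norm_eq_abs, abs_of_nonneg (sq_nonneg (dΓ x))]
    nlinarith [hdΓ_nonneg x, hdΓ_le x, norm_nonneg (x - g0)]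
  -- the distortion function
  set D : (EuclideanSpace ℝ (Fin d)) → ℝ := fun b => ∫ x, (min (dist x b) (dΓ x)) ^ 2 ∂μ with hD_def
  have hmin_nonneg : ∀ b x, 0 ≤ min (dist x b) (dΓ x) := fun b x =>
    le_min dist_nonneg (hdΓ_nonneg x)
  have hIntmin : ∀ b : (EuclideanSpace ℝ (Fin d)), Integrable (fun x => (min (dist x b) (dΓ x)) ^ 2) μ := by
    intro b
    refine Integrable.mono' hIntdΓsq
      ((((continuous_id.dist continuous_const).min hdΓ_cont).pow 2)).aestronglyMeasurable
      (Filter.Eventually.of_forall fun x => ?_)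
    rw [Real.norm_eq_abs, abs_of_nonneg (sq_nonneg (min (dist x b) (dΓ x)))]
    have := hmin_nonneg b x
    nlinarith [min_le_right (dist x b) (dΓ x), hdΓ_nonneg x]
  have hD_eq : ∀ b : (EuclideanSpace ℝ (Fin d)), D b = ∫ x, infDist x (insert b (↑Γ : Set (EuclideanSpace ℝ (Fin d)))) ^ 2 ∂μ := by
    intro b
    refine integral_congr_ae (Filter.Eventually.of_forall fun x => ?_)
    show (min (dist x b) (dΓ x)) ^ 2 = infDist x (insert b (↑Γ : Set (EuclideanSpace ℝ (Fin d)))) ^ 2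
    rw [infDist_insert_min hΓne]
  have hdec' : D (a 0) < ∫ x, dΓ x ^ 2 ∂μ := by rw [hD_eq]; exact hdec
  -- measurability of the cells
  have hWmeas : ∀ n, MeasurableSet (W n) := by
    intro n
    rw [hW n]
    have : {x : (EuclideanSpace ℝ (Fin d)) | ∀ g ∈ Γ, ‖x - a n‖ ≤ ‖x - g‖} =
        ⋂ g ∈ Γ, {x : (EuclideanSpace ℝ (Fin d)) | ‖x - a n‖ ≤ ‖x - g‖} := by
      ext x; simp
    rw [this]
    exact MeasurableSet.biInter Γ.countable_toSet fun g _ =>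
      (isClosed_le ((continuous_id.sub continuous_const).norm)
        ((continuous_id.sub continuous_const).norm)).measurableSet
  -- on W n the min is the distance to a n, off W n it is dΓ
  have hOnW : ∀ n, ∀ x ∈ W n, min (dist x (a n)) (dΓ x) = dist x (a n) := by
    intro n x hx
    rw [hW n] at hx
    refine min_eq_left ?_
    by_contra h
    push_neg at h
    obtain ⟨g, hgΓ, hgd⟩ := (infDist_lt_iff hΓne).mp h
    have := hx g (by exact_mod_cast hgΓ)
    rw [← dist_eq_norm, ← dist_eq_norm] at this
    exact not_le.mpr hgd this
  have hOffW : ∀ n, ∀ x ∉ W n, min (dist x (a n)) (dΓ x) = dΓ x := by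
    intro n x hx
    rw [hW n] at hx
    simp only [Set.mem_setOf_eq, not_forall] at hx
    obtain ⟨g, hgΓ, hgd⟩ := hx
    push_neg at hgd
    refine min_eq_right ?_
    calc dΓ x ≤ dist x g := infDist_le_dist_of_mem (by exact_mod_cast hgΓ)
      _ ≤ dist x (a n) := by rw [dist_eq_norm, dist_eq_norm]; exact hgd.le
  -- the key one-step decrease
  have hDec : ∀ n, D (a (n + 1)) ≤ D (a n) := by
    intro n
    have hsplit : ∀ b : (EuclideanSpace ℝ (Fin d)), D b = (∫ x in W n, (min (dist x b) (dΓ x)) ^ 2 ∂μ) +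
        ∫ x in (W n)ᶜ, (min (dist x b) (dΓ x)) ^ 2 ∂μ :=
      fun b => (integral_add_compl (hWmeas n) (hIntmin b)).symm
    rw [hsplit (a (n + 1)), hsplit (a n)]
    have hWn := hWmeas n
    -- on W n, D (a n) part equals squared distance
    have e1 : ∫ x in W n, (min (dist x (a n)) (dΓ x)) ^ 2 ∂μ =
        ∫ x in W n, ‖x - a n‖ ^ 2 ∂μ := by
      refine setIntegral_congr_fun hWn fun x hx => ?_
      rw [hOnW n x hx, dist_eq_norm]
    have e2 : ∫ x in (W n)ᶜ, (min (dist x (a n)) (dΓ x)) ^ 2 ∂μ =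
        ∫ x in (W n)ᶜ, dΓ x ^ 2 ∂μ := by
      refine setIntegral_congr_fun hWn.compl fun x hx => ?_
      rw [hOffW n x hx]
    rw [e1, e2]
    have b1 : ∫ x in W n, (min (dist x (a (n+1))) (dΓ x)) ^ 2 ∂μ ≤
        ∫ x in W n, ‖x - a (n+1)‖ ^ 2 ∂μ := by
      refine setIntegral_mono_on ((hIntmin _).integrableOn) ((hIntsq _).integrableOn) hWn
        fun x _ => ?_
      rw [← dist_eq_norm]
      have h1 := hmin_nonneg (a (n+1)) x
      nlinarith [min_le_left (dist x (a (n+1))) (dΓ x), dist_nonneg (x := x) (y := a (n+1))]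
    have b2 : ∫ x in (W n)ᶜ, (min (dist x (a (n+1))) (dΓ x)) ^ 2 ∂μ ≤
        ∫ x in (W n)ᶜ, dΓ x ^ 2 ∂μ := by
      refine setIntegral_mono_on ((hIntmin _).integrableOn) (hIntdΓsq.integrableOn) hWn.compl
        fun x _ => ?_
      have h1 := hmin_nonneg (a (n+1)) x
      nlinarith [min_le_right (dist x (a (n+1))) (dΓ x), hdΓ_nonneg x]
    -- the centroid inequality on W n
    have b3 : ∫ x in W n, ‖x - a (n+1)‖ ^ 2 ∂μ ≤ ∫ x in W n, ‖x - a n‖ ^ 2 ∂μ := by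
      refine centroid_opt (μ.restrict (W n)) (hIntId.integrableOn) ((hIntsq _).integrableOn)
        ((hIntsq _).integrableOn) ?_
      rw [Measure.restrict_apply_univ]
      exact hiter n
    linarith
  have hMon : ∀ n, D (a n) ≤ D (a 0) := by
    intro n
    induction n with
    | zero => exact le_refl _
    | succ k ih => exact le_trans (hDec k) ih
  -- tail of the integral: find a ball capturing most of `∫ dΓ ^ 2`
  have hUnion : ⋃ k : ℕ, ball (0:EuclideanSpace ℝ (Fin d)) k = Set.univ := by
    ext x
    simp only [Set.mem_iUnion, mem_ball, Set.mem_univ, iff_true]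
    obtain ⟨k, hk⟩ := exists_nat_gt (dist x 0)
    exact ⟨k, hk⟩
  have htend : Filter.Tendsto (fun k : ℕ => ∫ x in ball (0:EuclideanSpace ℝ (Fin d)) k, dΓ x ^ 2 ∂μ)
      Filter.atTop (nhds (∫ x, dΓ x ^ 2 ∂μ)) := by
    have := tendsto_setIntegral_of_monotone (μ := μ) (f := fun x => dΓ x ^ 2)
      (s := fun k : ℕ => ball (0:EuclideanSpace ℝ (Fin d)) k) (fun k => measurableSet_ball)
      (fun i j hij => ball_subset_ball (by exact_mod_cast hij))
      (by rw [hUnion]; exact hIntdΓsq.integrableOn)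
    rwa [hUnion, setIntegral_univ] at this
  obtain ⟨k, hk⟩ := (htend.eventually (eventually_gt_nhds hdec')).exists
  -- the bound
  set M : ℝ := Γ.sup' ⟨g0, hg0⟩ (fun g => ‖g‖) with hM_def
  have hMg : ∀ g ∈ Γ, ‖g‖ ≤ M := fun g hg => Finset.le_sup' _ hg
  refine ⟨2 * k + M, fun n => ?_⟩
  by_contra hlarge
  push_neg at hlarge
  -- for x in the ball, the min equals dΓ x
  have hball : ∀ x ∈ ball (0:EuclideanSpace ℝ (Fin d)) k, min (dist x (a n)) (dΓ x) = dΓ x := by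
    intro x hx
    rw [mem_ball, dist_zero_right] at hx
    refine min_eq_right ?_
    have h1 : dΓ x ≤ ‖x‖ + ‖g0‖ := le_trans (hdΓ_le x)
      (le_trans (norm_sub_le x g0) (le_refl _))
    have h2 : ‖g0‖ ≤ M := hMg g0 hg0
    have h3 : ‖a n‖ - ‖x‖ ≤ dist x (a n) := by
      rw [dist_eq_norm]
      have := norm_sub_norm_le (a n) x
      rw [norm_sub_rev] at this
      linarith [abs_le.mp (abs_norm_sub_norm_le (a n) x)]
    have hM0 : (0:ℝ) ≤ M := le_trans (norm_nonneg g0) h2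
    linarith
  have hlow : ∫ x in ball (0:EuclideanSpace ℝ (Fin d)) k, dΓ x ^ 2 ∂μ ≤ D (a n) := by
    have : ∫ x in ball (0:EuclideanSpace ℝ (Fin d)) k, dΓ x ^ 2 ∂μ =
        ∫ x in ball (0:EuclideanSpace ℝ (Fin d)) k, (min (dist x (a n)) (dΓ x)) ^ 2 ∂μ := by
      refine (setIntegral_congr_fun measurableSet_ball fun x hx => ?_).symm
      rw [hball x hx]
    rw [this]
    exact setIntegral_le_integral (hIntmin (a n))
      (Filter.Eventually.of_forall fun x => sq_nonneg _)
  have := hMon n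
  linarith
end
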